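/- arXiv:1512.01348 — 3 statements merged into one kernel-verified Lean document; each statement's English description precedes it below -/
import Mathlib

section
/- Let h be a positive integer and let G be an entropy-minimal finite simple graph with H(G) strictly between h−1 and h. If M is the set of vertices covered by a maximum matching of G and |M| = 2m, then h ≤ 2m ≤ 2(h−1). -/
noncomputable section

/-- `g : [q]^V → [q]` depends essentially on coordinate `u`: there exist two inputs that
differ only at coordinate `u` on which `g` takes different values. -/
def EssDependsOn {V : Type*} {q : ℕ} (g : (V → Fin q) → Fin q) (u : V) : Prop :=
  ∃ a b : V → Fin q, (∀ w, w ≠ u → a w = b w) ∧ g a ≠ g b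

/-- The interaction graph of `f` is contained in the simple graph `G`
(viewed as the symmetric loopless digraph with arcs `(u,v)` and `(v,u)` for every edge `uv`). -/
def IGLe {V : Type*} {q : ℕ} (G : SimpleGraph V) (f : (V → Fin q) → (V → Fin q)) : Prop :=
  ∀ u v : V, EssDependsOn (fun x => f x v) u → G.Adj u v

/-- The `q`-ary guessing number of a simple graph `G`: the maximum of `log_q |Fix(f)|`
over all `f` whose interaction graph is contained in `G`. -/
def guessing {V : Type*} (G : SimpleGraph V) (q : ℕ) : ℝ :=
  sSup {x : ℝ | ∃ f : (V → Fin q) → (V → Fin q),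
    IGLe G f ∧ x = Real.logb q (Set.ncard {p : V → Fin q | f p = p})}

/-- The entropy of a simple graph: the supremum over `q ≥ 2` of its `q`-guessing numbers. -/
def graphEntropy {V : Type*} (G : SimpleGraph V) : ℝ :=
  sSup {x : ℝ | ∃ q : ℕ, 2 ≤ q ∧ x = guessing G q}

/-- The set of all entropies of finite simple graphs. -/
def entropySet : Set ℝ := {x : ℝ | ∃ (n : ℕ) (G : SimpleGraph (Fin n)), graphEntropy G = x}

/-- A finite simple graph is entropy-minimal if no simple graph with fewer vertices has the same
fractional part of the entropy. -/
def EntropyMinimal {n : ℕ} (G : SimpleGraph (Fin n)) : Prop :=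
  ∀ m : ℕ, m < n → ∀ G' : SimpleGraph (Fin m),
    Int.fract (graphEntropy G') ≠ Int.fract (graphEntropy G)

/-- If `x` and `y` differ only on coordinates that `g` does not depend on, then `g x = g y`. -/
lemma eval_eq_aux {n q : ℕ} (g : (Fin n → Fin q) → Fin q) :
    ∀ (s : Finset (Fin n)) (x y : Fin n → Fin q),
      (∀ u, x u ≠ y u → u ∈ s) → (∀ u, x u ≠ y u → ¬ EssDependsOn g u) → g x = g y := by
  classical
  intro s
  induction s using Finset.induction_on with
  | empty =>
    intro x y hs _
    have : x = y := funext fun u => by_contra fun h => by simpa using hs u h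
    rw [this]
  | @insert a s ha ih =>
    intro x y hs hdep
    by_cases hxy : x a = y a
    · refine ih x y (fun u hu => ?_) hdep
      rcases Finset.mem_insert.mp (hs u hu) with h | h
      · exact absurd (h ▸ hxy) hu
      · exact h
    · set x' := Function.update x a (y a) with hx'
      have h1 : g x = g x' := by
        by_contra hne
        exact hdep a hxy ⟨x, x', fun w hw => (Function.update_of_ne hw _ _).symm, hne⟩
      have hne' : ∀ u, x' u ≠ y u → x u ≠ y u ∧ u ≠ a := by
        intro u hu
        have hua : u ≠ a := by
          intro h; subst h; exact hu (Function.update_self _ _ _)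
        rw [hx', Function.update_of_ne hua] at hu
        exact ⟨hu, hua⟩
      have h2 : g x' = g y := by
        refine ih x' y (fun u hu => ?_) (fun u hu => hdep u (hne' u hu).1)
        rcases Finset.mem_insert.mp (hs u (hne' u hu).1) with h | h
        · exact absurd h (hne' u hu).2
        · exact h
      exact h1.trans h2

lemma eval_eq {n q : ℕ} (g : (Fin n → Fin q) → Fin q) (x y : Fin n → Fin q)
    (h : ∀ u, x u ≠ y u → ¬ EssDependsOn g u) : g x = g y :=
  eval_eq_aux g Finset.univ x y (fun u _ => Finset.mem_univ u) h

/-- If the complement of `S` is independent in `G`, then any `f` with interaction graph in `G`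
has at most `q ^ |S|` fixed points. -/
lemma fix_ncard_le {n q : ℕ} (G : SimpleGraph (Fin n)) (S : Set (Fin n))
    (hind : ∀ u v : Fin n, u ∉ S → v ∉ S → ¬ G.Adj u v)
    (f : (Fin n → Fin q) → (Fin n → Fin q)) (hf : IGLe G f) :
    Set.ncard {p : Fin n → Fin q | f p = p} ≤ q ^ S.ncard := by
  classical
  have hinj : Function.Injective
      (fun (p : {p : Fin n → Fin q | f p = p}) => (fun s : S => (p : Fin n → Fin q) s)) := by
    rintro ⟨p₁, hp₁⟩ ⟨p₂, hp₂⟩ hagree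
    simp only at hagree
    have key : p₁ = p₂ := by
      funext v
      by_cases hv : v ∈ S
      · exact congrFun hagree ⟨v, hv⟩
      · have heq : f p₁ v = f p₂ v := by
          refine eval_eq (fun x => f x v) p₁ p₂ (fun u hu hdep => ?_)
          have hu' : u ∉ S := fun huS => hu (congrFun hagree ⟨u, huS⟩)
          exact hind u v hu' hv (hf u v hdep)
        calc p₁ v = f p₁ v := (congrFun hp₁ v).symm
          _ = f p₂ v := heq
          _ = p₂ v := congrFun hp₂ v
    exact Subtype.ext key
  calc Set.ncard {p : Fin n → Fin q | f p = p}
      = Nat.card {p : Fin n → Fin q | f p = p} := (Nat.card_coe_set_eq _).symm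
    _ ≤ Nat.card (S → Fin q) := Nat.card_le_card_of_injective _ hinj
    _ = Nat.card (Fin q) ^ Nat.card S := Nat.card_fun
    _ = q ^ S.ncard := by
        rw [Nat.card_eq_fintype_card, Fintype.card_fin, Nat.card_coe_set_eq]

lemma logb_le_of_le {q k c : ℕ} (hq : 2 ≤ q) (hc : c ≤ q ^ k) :
    Real.logb q c ≤ (k : ℝ) := by
  have hb : (1:ℝ) < q := by exact_mod_cast hq
  rcases Nat.eq_zero_or_pos c with h0 | hpos
  · simp only [h0, Nat.cast_zero, Real.logb_zero]
    exact Nat.cast_nonneg k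
  · have h1 : Real.logb q c ≤ Real.logb q ((q:ℝ) ^ k) :=
      Real.logb_le_logb_of_le hb (by exact_mod_cast hpos) (by exact_mod_cast hc)
    rwa [Real.logb_pow, Real.logb_self_eq_one hb, mul_one] at h1

lemma le_logb_of_le {q k c : ℕ} (hq : 2 ≤ q) (hc : q ^ k ≤ c) :
    (k : ℝ) ≤ Real.logb q c := by
  have hb : (1:ℝ) < q := by exact_mod_cast hq
  have h1 : Real.logb q ((q:ℝ) ^ k) ≤ Real.logb q c :=
    Real.logb_le_logb_of_le hb (by positivity) (by exact_mod_cast hc)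
  rwa [Real.logb_pow, Real.logb_self_eq_one hb, mul_one] at h1

/-- If `G` is entropy-minimal with `h - 1 < H(G) < h`, and `M` is (the vertex set of) a
maximum matching of `G` with `|M| = 2m`, then `h ≤ 2m ≤ 2(h-1)`. -/
theorem entropyMinimal_matching_size_bounds {n : ℕ} (h : ℕ) (hh : 0 < h)
    (G : SimpleGraph (Fin n)) (hmin : EntropyMinimal G)
    (h1 : (h : ℝ) - 1 < graphEntropy G) (h2 : graphEntropy G < (h : ℝ))
    (M : G.Subgraph) (hM : M.IsMatching)
    (hmax : ∀ M' : G.Subgraph, M'.IsMatching → M'.verts.ncard ≤ M.verts.ncard)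
    (m : ℕ) (hm : M.verts.ncard = 2 * m) :
    h ≤ 2 * m ∧ 2 * m ≤ 2 * (h - 1) := by
  classical
  -- Step 1: the uncovered vertices form an independent set.
  have hind : ∀ u v : Fin n, u ∉ M.verts → v ∉ M.verts → ¬ G.Adj u v := by
    intro u v hu hv hadj
    have hne : u ≠ v := hadj.ne
    have hMadj := SimpleGraph.Subgraph.IsMatching.subgraphOfAdj hadj
    have hdisj : Disjoint M.support (G.subgraphOfAdj hadj).support := by
      rw [hM.support_eq_verts, hMadj.support_eq_verts, SimpleGraph.subgraphOfAdj_verts,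
        Set.disjoint_right]
      rintro x (rfl | rfl) <;> assumption
    have hM' : (M ⊔ G.subgraphOfAdj hadj).IsMatching := hM.sup hMadj hdisj
    have hcard : (M ⊔ G.subgraphOfAdj hadj).verts.ncard = 2 * m + 2 := by
      rw [SimpleGraph.Subgraph.verts_sup, Set.ncard_union_eq ?_ (M.verts.toFinite)
        ((G.subgraphOfAdj hadj).verts.toFinite), hm, SimpleGraph.subgraphOfAdj_verts,
        Set.ncard_pair hne]
      rw [hM.support_eq_verts, hMadj.support_eq_verts, SimpleGraph.subgraphOfAdj_verts] at hdisj
      exact hdisj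
    have := hmax _ hM'
    rw [hcard, hm] at this
    omega
  -- Step 2: upper bound: every q-guessing number is at most 2m.
  have hub : ∀ x ∈ {x : ℝ | ∃ q : ℕ, 2 ≤ q ∧ x = guessing G q}, x ≤ ((2 * m : ℕ) : ℝ) := by
    rintro x ⟨q, hq, rfl⟩
    have hApos : {x : ℝ | ∃ f : (Fin n → Fin q) → (Fin n → Fin q),
        IGLe G f ∧ x = Real.logb q (Set.ncard {p : Fin n → Fin q | f p = p})}.Nonempty := by
      refine ⟨_, fun _ _ => ⟨0, by omega⟩, ?_, rfl⟩
      intro u v hdep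
      exact absurd rfl hdep.choose_spec.choose_spec.2
    refine csSup_le hApos ?_
    rintro x ⟨f, hf, rfl⟩
    have hle := fix_ncard_le G M.verts hind f hf
    rw [hm] at hle
    exact logb_le_of_le hq hle
  have hBne : {x : ℝ | ∃ q : ℕ, 2 ≤ q ∧ x = guessing G q}.Nonempty :=
    ⟨guessing G 2, 2, le_refl 2, rfl⟩
  have hEub : graphEntropy G ≤ ((2 * m : ℕ) : ℝ) := csSup_le hBne hub
  -- Step 3: lower bound: guessing number at q = 2 is at least m.
  -- The partner function of the matching.
  set pa : Fin n → Fin n := fun v => if hv : v ∈ M.verts then (hM hv).choose else v with hpa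
  have hadjpa : ∀ v (hv : v ∈ M.verts), M.Adj v (pa v) := by
    intro v hv
    simp only [hpa, dif_pos hv]
    exact (hM hv).choose_spec.1
  have hmem : ∀ v ∈ M.verts, pa v ∈ M.verts := fun v hv => (hadjpa v hv).symm.fst_mem
  have hnepa : ∀ v ∈ M.verts, pa v ≠ v := fun v hv => (M.adj_sub (hadjpa v hv)).ne'
  have hinv : ∀ v ∈ M.verts, pa (pa v) = v := by
    intro v hv
    have hv2 := hmem v hv
    show (if h : pa v ∈ M.verts then (hM h).choose else pa v) = v
    rw [dif_pos hv2]
    exact ((hM hv2).choose_spec.2 v (hadjpa v hv).symm).symm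
  have hfix0 : ∀ v, v ∉ M.verts → pa v = v := by
    intro v hv; simp only [hpa, dif_neg hv]
  -- One endpoint from each edge.
  set S : Set (Fin n) := {v : Fin n | v ∈ M.verts ∧ v < pa v} with hS
  set T : Set (Fin n) := {v : Fin n | v ∈ M.verts ∧ pa v < v} with hT
  have himg : pa '' S = T := by
    ext t
    constructor
    · rintro ⟨v, ⟨hv, hlt⟩, rfl⟩
      exact ⟨hmem v hv, by rw [hinv v hv]; exact hlt⟩
    · rintro ⟨ht, hlt⟩
      exact ⟨pa t, ⟨hmem t ht, by rw [hinv t ht]; exact hlt⟩, hinv t ht⟩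
  have hSm : S.ncard = m := by
    have hinjS : Set.InjOn pa S := by
      rintro v₁ ⟨hv₁, _⟩ v₂ ⟨hv₂, _⟩ hvv
      calc v₁ = pa (pa v₁) := (hinv v₁ hv₁).symm
        _ = pa (pa v₂) := by rw [hvv]
        _ = v₂ := hinv v₂ hv₂
    have hTcard : T.ncard = S.ncard := by
      rw [← himg, Set.ncard_image_of_injOn hinjS]
    have hunion : S ∪ T = M.verts := by
      ext v
      constructor
      · rintro (⟨hv, _⟩ | ⟨hv, _⟩) <;> exact hv
      · intro hv
        rcases lt_or_gt_of_ne (hnepa v hv) with hlt | hlt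
        · exact Or.inr ⟨hv, hlt⟩
        · exact Or.inl ⟨hv, hlt⟩
    have hdisjST : Disjoint S T := by
      rw [Set.disjoint_left]
      rintro v ⟨_, hlt⟩ ⟨_, hlt'⟩
      exact absurd hlt (lt_asymm hlt')
    have : S.ncard + T.ncard = 2 * m := by
      rw [← Set.ncard_union_eq hdisjST S.toFinite T.toFinite, hunion, hm]
    omega
  -- The guessing function: copy the partner's value along matching edges.
  set f2 : (Fin n → Fin 2) → (Fin n → Fin 2) :=
    fun x v => if v ∈ M.verts then x (pa v) else 0 with hf2
  have hIG : IGLe G f2 := by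
    intro u v hdep
    obtain ⟨a, b, hab, hne2⟩ := hdep
    by_cases hv : v ∈ M.verts
    · simp only [hf2, if_pos hv] at hne2
      have hupv : u = pa v := by
        by_contra hupv
        exact hne2 (hab (pa v) (Ne.symm hupv))
      subst hupv
      exact (M.adj_sub (hadjpa v hv)).symm
    · simp only [hf2, if_neg hv] at hne2
      exact absurd rfl hne2
  -- Injection from `S → Fin 2` into the fixed points of `f2`.
  set ψ : (S → Fin 2) → (Fin n → Fin 2) := fun y v =>
    if hv : v ∈ S then y ⟨v, hv⟩ else if hv' : pa v ∈ S then y ⟨pa v, hv'⟩ else 0 with hψ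
  have hψfix : ∀ y, f2 (ψ y) = ψ y := by
    intro y
    funext v
    by_cases hv : v ∈ M.verts
    · have hstep : f2 (ψ y) v = ψ y (pa v) := by simp only [hf2, if_pos hv]
      by_cases hvS : v ∈ S
      · have hninS : pa v ∉ S := by
          rintro ⟨_, hlt⟩
          rw [hinv v hv] at hlt
          exact absurd hvS.2 (lt_asymm hlt)
        have hppvS : pa (pa v) ∈ S := by rw [hinv v hv]; exact hvS
        rw [hstep]
        simp only [hψ, dif_neg hninS, dif_pos hppvS, dif_pos hvS]
        exact congrArg y (Subtype.ext (hinv v hv))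
      · have hlt : pa v < v := by
          rcases lt_or_gt_of_ne (hnepa v hv) with hlt | hlt
          · exact hlt
          · exact absurd ⟨hv, hlt⟩ hvS
        have hpvS : pa v ∈ S := ⟨hmem v hv, by rw [hinv v hv]; exact hlt⟩
        rw [hstep]
        simp only [hψ, dif_pos hpvS, dif_neg hvS]
    · have h1 : v ∉ S := fun hvS => hv hvS.1
      have h2 : pa v ∉ S := by rw [hfix0 v hv]; exact h1
      simp only [hf2, if_neg hv, hψ, dif_neg h1, dif_neg h2]
  have hψinj : Function.Injective ψ := by
    intro y₁ y₂ hyy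
    funext ⟨v, hv⟩
    have := congrFun hyy v
    simpa only [hψ, dif_pos hv] using this
  -- Count: at least 2^m fixed points.
  have hcount : 2 ^ m ≤ Set.ncard {p : Fin n → Fin 2 | f2 p = p} := by
    have hinj' : Function.Injective
        (fun y : (S → Fin 2) => (⟨ψ y, hψfix y⟩ : {p : Fin n → Fin 2 | f2 p = p})) := by
      intro y₁ y₂ hyy
      exact hψinj (congrArg Subtype.val hyy)
    calc 2 ^ m = Nat.card (Fin 2) ^ Nat.card S := by
          rw [Nat.card_eq_fintype_card, Fintype.card_fin, Nat.card_coe_set_eq, hSm]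
      _ = Nat.card (S → Fin 2) := Nat.card_fun.symm
      _ ≤ Nat.card {p : Fin n → Fin 2 | f2 p = p} := Nat.card_le_card_of_injective _ hinj'
      _ = Set.ncard {p : Fin n → Fin 2 | f2 p = p} := Nat.card_coe_set_eq _
  -- Hence m ≤ guessing G 2 ≤ graphEntropy G.
  have hbddA : BddAbove {x : ℝ | ∃ f : (Fin n → Fin 2) → (Fin n → Fin 2),
      IGLe G f ∧ x = Real.logb 2 (Set.ncard {p : Fin n → Fin 2 | f p = p})} := by
    refine ⟨((2 * m : ℕ) : ℝ), ?_⟩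
    rintro x ⟨f, hf, rfl⟩
    have hle := fix_ncard_le G M.verts hind f hf
    rw [hm] at hle
    exact logb_le_of_le (le_refl 2) hle
  have hguess2 : (m : ℝ) ≤ guessing G 2 := by
    have hmem2 : Real.logb 2 (Set.ncard {p : Fin n → Fin 2 | f2 p = p}) ∈
        {x : ℝ | ∃ f : (Fin n → Fin 2) → (Fin n → Fin 2),
          IGLe G f ∧ x = Real.logb 2 (Set.ncard {p : Fin n → Fin 2 | f p = p})} :=
      ⟨f2, hIG, rfl⟩
    have hle2 : (m : ℝ) ≤ Real.logb 2 (Set.ncard {p : Fin n → Fin 2 | f2 p = p}) := by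
      have := le_logb_of_le (q := 2) (le_refl 2) hcount
      exact_mod_cast this
    exact hle2.trans (le_csSup hbddA hmem2)
  have hElb : (m : ℝ) ≤ graphEntropy G :=
    hguess2.trans (le_csSup ⟨((2 * m : ℕ) : ℝ), hub⟩ ⟨2, le_refl 2, rfl⟩)
  -- Conclude.
  have hlt1 : (h : ℝ) < ((2 * m + 1 : ℕ) : ℝ) := by
    push_cast
    have := lt_of_lt_of_le h1 hEub
    push_cast at this
    linarith
  have hlt2 : ((m : ℕ) : ℝ) < ((h : ℕ) : ℝ) := lt_of_le_of_lt hElb h2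
  have hn1 : h < 2 * m + 1 := by exact_mod_cast hlt1
  have hn2 : m < h := by exact_mod_cast hlt2
  omega

end
end

section
/- Let h be a positive integer and let G be an entropy-minimal finite simple graph with H(G) strictly between h−1 and h. If M is the set of vertices covered by a maximum matching of G, then the number of vertices of G outside M is strictly smaller than |M|; in particular G has fewer than 2|M| vertices. -/
noncomputable section

set_option maxHeartbeats 1000000

section AuxEntropyMachinery


/-- The set of which `guessing` is the supremum. -/
def gset {V : Type*} (G : SimpleGraph V) (q : ℕ) : Set ℝ :=
  {x : ℝ | ∃ f : (V → Fin q) → (V → Fin q),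
    IGLe G f ∧ x = Real.logb q (Set.ncard {p : V → Fin q | f p = p})}

lemma guessing_eq_sSup_gset {V : Type*} (G : SimpleGraph V) (q : ℕ) :
    guessing G q = sSup (gset G q) := rfl

/-- The set of which `graphEntropy` is the supremum. -/
def eset {V : Type*} (G : SimpleGraph V) : Set ℝ :=
  {x : ℝ | ∃ q : ℕ, 2 ≤ q ∧ x = guessing G q}

lemma graphEntropy_eq_sSup_eset {V : Type*} (G : SimpleGraph V) :
    graphEntropy G = sSup (eset G) := rfl

lemma not_dependsOn_eq {V : Type*} {q : ℕ} (g : (V → Fin q) → Fin q) (u : V)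
    (h : ¬ EssDependsOn g u) {a b : V → Fin q} (hab : ∀ w, w ≠ u → a w = b w) : g a = g b := by
  by_contra hne
  exact h ⟨a, b, hab, hne⟩

/-- A function whose essential dependencies satisfy `P` is determined by the coordinates in `P`. -/
lemma locality {V : Type*} [Fintype V] [DecidableEq V] {q : ℕ}
    (g : (V → Fin q) → Fin q) (P : V → Prop)
    (h : ∀ u, EssDependsOn g u → P u) :
    ∀ a b : V → Fin q, (∀ v, P v → a v = b v) → g a = g b := by
  classical
  suffices H : ∀ (k : ℕ) (a b : V → Fin q),
      (Finset.univ.filter fun v => a v ≠ b v).card = k →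
      (∀ v, P v → a v = b v) → g a = g b by
    intro a b hab
    exact H _ a b rfl hab
  intro k
  induction k using Nat.strong_induction_on with
  | _ k ih =>
    intro a b hk hab
    rcases Nat.eq_zero_or_pos k with h0 | hpos
    · have : ∀ v, a v = b v := by
        intro v
        by_contra hv
        have hmem : v ∈ Finset.univ.filter fun v => a v ≠ b v := by
          simp [hv]
        rw [h0, Finset.card_eq_zero] at hk
        simp [hk] at hmem
      exact congrArg g (funext this)
    · have hne : (Finset.univ.filter fun v => a v ≠ b v).Nonempty := by
        rw [← Finset.card_pos, hk]; exact hpos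
      obtain ⟨u, hu⟩ := hne
      have hu' : a u ≠ b u := by simpa using hu
      have hPu : ¬ P u := fun hP => hu' (hab u hP)
      have hdep : ¬ EssDependsOn g u := fun hd => hPu (h u hd)
      set a' := Function.update a u (b u) with ha'
      have h1 : g a = g a' := by
        apply not_dependsOn_eq g u hdep
        intro w hw
        simp [ha', Function.update_of_ne hw]
      have hsub : (Finset.univ.filter fun v => a' v ≠ b v) ⊆
          (Finset.univ.filter fun v => a v ≠ b v).erase u := by
        intro v hv
        simp only [Finset.mem_filter, Finset.mem_univ, true_and] at hv
        rcases eq_or_ne v u with rfl | hvu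
        · exfalso; apply hv; simp [ha']
        · rw [Finset.mem_erase]
          refine ⟨hvu, ?_⟩
          simp only [Finset.mem_filter, Finset.mem_univ, true_and]
          rwa [ha', Function.update_of_ne hvu] at hv
      have hcard : (Finset.univ.filter fun v => a' v ≠ b v).card < k := by
        calc (Finset.univ.filter fun v => a' v ≠ b v).card
            ≤ ((Finset.univ.filter fun v => a v ≠ b v).erase u).card :=
              Finset.card_le_card hsub
          _ < (Finset.univ.filter fun v => a v ≠ b v).card := by
              apply Finset.card_erase_lt_of_mem hu
          _ = k := hk
      have h2 : g a' = g b := by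
        apply ih _ hcard a' b rfl
        intro v hv
        rcases eq_or_ne v u with rfl | hvu
        · simp [ha']
        · rw [ha', Function.update_of_ne hvu]; exact hab v hv
      rw [h1, h2]

lemma ncard_fix_eq {V : Type*} [Fintype V] [DecidableEq V] {q : ℕ}
    (f : (V → Fin q) → (V → Fin q)) :
    Set.ncard {p : V → Fin q | f p = p} =
      (Finset.univ.filter fun p : V → Fin q => f p = p).card := by
  classical
  rw [show {p : V → Fin q | f p = p} = ↑(Finset.univ.filter fun p : V → Fin q => f p = p) by
    ext p; simp]
  exact Set.ncard_coe_finset _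

lemma zero_mem_gset {V : Type*} (G : SimpleGraph V) {q : ℕ} (hq : 0 < q) :
    (0 : ℝ) ∈ gset G q := by
  refine ⟨fun _ _ => ⟨0, hq⟩, ?_, ?_⟩
  · rintro u v ⟨a, b, hab, hne⟩
    exact absurd rfl hne
  · have : {p : V → Fin q | (fun _ : V => (⟨0, hq⟩ : Fin q)) = p} =
        {fun _ : V => (⟨0, hq⟩ : Fin q)} := by
      ext p; simp [eq_comm]
    rw [this, Set.ncard_singleton]
    simp

lemma gset_nonempty {V : Type*} (G : SimpleGraph V) {q : ℕ} (hq : 0 < q) :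
    (gset G q).Nonempty := ⟨0, zero_mem_gset G hq⟩

lemma mem_gset_le {V : Type*} [Fintype V] [DecidableEq V] (G : SimpleGraph V) {q : ℕ}
    (hq : 2 ≤ q) : ∀ x ∈ gset G q, x ≤ (Fintype.card V : ℝ) := by
  classical
  rintro x ⟨f, hf, rfl⟩
  have hq1 : (1 : ℝ) < (q : ℝ) := by exact_mod_cast hq.trans_lt' one_lt_two
  set N := Set.ncard {p : V → Fin q | f p = p} with hN
  have hle : N ≤ q ^ Fintype.card V := by
    have h1 : N ≤ (Set.univ : Set (V → Fin q)).ncard :=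
      Set.ncard_le_ncard (Set.subset_univ _) Set.finite_univ
    rwa [Set.ncard_univ, Nat.card_eq_fintype_card, Fintype.card_fun, Fintype.card_fin] at h1
  rcases Nat.eq_zero_or_pos N with h0 | hpos
  · rw [h0]
    simp [Real.logb_zero]
  · calc Real.logb q N ≤ Real.logb q ((q : ℝ) ^ Fintype.card V) := by
          apply Real.logb_le_logb_of_le hq1 (by exact_mod_cast hpos)
          exact_mod_cast hle
      _ = (Fintype.card V : ℝ) := by
          rw [Real.logb_pow, Real.logb_self_eq_one hq1, mul_one]

lemma bddAbove_gset {V : Type*} [Fintype V] [DecidableEq V] (G : SimpleGraph V) {q : ℕ}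
    (hq : 2 ≤ q) : BddAbove (gset G q) :=
  ⟨_, fun x hx => mem_gset_le G hq x hx⟩

lemma guessing_nonneg {V : Type*} [Fintype V] [DecidableEq V] (G : SimpleGraph V) {q : ℕ}
    (hq : 2 ≤ q) : 0 ≤ guessing G q := by
  rw [guessing_eq_sSup_gset]
  exact le_csSup (bddAbove_gset G hq) (zero_mem_gset G (by omega))

lemma guessing_le_card {V : Type*} [Fintype V] [DecidableEq V] (G : SimpleGraph V) {q : ℕ}
    (hq : 2 ≤ q) : guessing G q ≤ (Fintype.card V : ℝ) := by
  rw [guessing_eq_sSup_gset]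
  exact Real.sSup_le (mem_gset_le G hq) (by positivity)

lemma bddAbove_eset {V : Type*} [Fintype V] [DecidableEq V] (G : SimpleGraph V) :
    BddAbove (eset G) := by
  refine ⟨(Fintype.card V : ℝ), ?_⟩
  rintro x ⟨q, hq, rfl⟩
  exact guessing_le_card G hq

lemma eset_nonempty {V : Type*} (G : SimpleGraph V) : (eset G).Nonempty :=
  ⟨guessing G 2, 2, le_rfl, rfl⟩

lemma graphEntropy_nonneg {V : Type*} [Fintype V] [DecidableEq V] (G : SimpleGraph V) :
    0 ≤ graphEntropy G := by
  rw [graphEntropy_eq_sSup_eset]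
  exact le_trans (guessing_nonneg G le_rfl) (le_csSup (bddAbove_eset G) ⟨2, le_rfl, rfl⟩)

lemma guessing_le_graphEntropy {V : Type*} [Fintype V] [DecidableEq V] (G : SimpleGraph V)
    {q : ℕ} (hq : 2 ≤ q) : guessing G q ≤ graphEntropy G := by
  rw [graphEntropy_eq_sSup_eset]
  exact le_csSup (bddAbove_eset G) ⟨q, hq, rfl⟩

lemma graphEntropy_fin_zero (G : SimpleGraph (Fin 0)) : graphEntropy G = 0 := by
  have hg : ∀ q : ℕ, 0 < q → guessing G q = 0 := by
    intro q hq
    have hset : gset G q = {0} := by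
      ext x
      constructor
      · rintro ⟨f, hf, rfl⟩
        have hfix : {p : Fin 0 → Fin q | f p = p} = {fun i : Fin 0 => i.elim0} := by
          ext p
          constructor
          · intro _
            simp only [Set.mem_singleton_iff]
            funext i; exact i.elim0
          · intro _
            simp only [Set.mem_setOf_eq]
            funext i; exact i.elim0
        rw [hfix, Set.ncard_singleton]
        simp
      · rintro rfl
        exact zero_mem_gset G hq
    rw [guessing_eq_sSup_gset, hset, csSup_singleton]
  have : eset G = {0} := by
    ext x
    constructor
    · rintro ⟨q, hq, rfl⟩
      simp [hg q (by omega)]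
    · rintro rfl
      exact ⟨2, le_rfl, (hg 2 two_pos).symm⟩
  rw [graphEntropy_eq_sSup_eset, this, csSup_singleton]


lemma core (G : SimpleGraph (Fin n)) (hmin : EntropyMinimal G)
    (W D : Finset (Fin n))
    (hDW : ∀ d ∈ D, d ∉ W)
    (hDnbr : ∀ d ∈ D, ∀ v : Fin n, G.Adj v d → v ∈ W)
    (hne : (W ∪ D).Nonempty)
    (i : ↥W → Fin n) (hinj : Function.Injective i)
    (hiD : ∀ w : ↥W, i w ∈ D) (hadj : ∀ w : ↥W, G.Adj ↑w (i w)) : False := by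
  classical
  set A : Finset (Fin n) := W ∪ D with hA
  set C : Finset (Fin n) := Aᶜ with hC
  set m : ℕ := C.card with hm
  have hCA : ∀ v : Fin n, v ∈ C ↔ v ∉ A := fun v => Finset.mem_compl
  have hmn : m < n := by
    have h1 : C.card = Fintype.card (Fin n) - A.card := Finset.card_compl A
    have h2 : 0 < A.card := Finset.card_pos.mpr hne
    have h3 : A.card ≤ Fintype.card (Fin n) := Finset.card_le_univ A
    rw [Fintype.card_fin] at h1 h3
    omega
  let e : ↥C ≃ Fin m := C.equivFin
  let G' : SimpleGraph (Fin m) :=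
    { Adj := fun a b => G.Adj ↑(e.symm a) ↑(e.symm b)
      symm := ⟨fun a b hab => G.symm.symm _ _ hab⟩
      loopless := ⟨fun a haa => G.loopless.irrefl _ haa⟩ }
  have hG'adj : ∀ a b : Fin m, G'.Adj a b ↔ G.Adj ↑(e.symm a) ↑(e.symm b) := fun _ _ => Iff.rfl
  -- the exact per-q computation

  have key : ∀ q : ℕ, 2 ≤ q → guessing G q = (W.card : ℝ) + guessing G' q := by
    intro q hq
    have hq0 : 0 < q := by omega
    have hq1 : (1 : ℝ) < (q : ℝ) := by exact_mod_cast (by omega : 1 < q)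
    set d0 : Fin q := ⟨0, hq0⟩ with hd0
    have hAnotC : ∀ v : Fin n, v ∈ A → v ∉ C := by
      intro v hv hvc
      exact (Finset.mem_compl.mp hvc) hv
    have hWA : ∀ v : Fin n, v ∈ W → v ∈ A := fun v hv => Finset.mem_union_left _ hv
    have hDA : ∀ v : Fin n, v ∈ D → v ∈ A := fun v hv => Finset.mem_union_right _ hv
    have hD_of : ∀ v : Fin n, v ∉ C → v ∉ W → v ∈ D := by
      intro v hvC hvW
      have : v ∈ A := by
        by_contra h
        exact hvC (Finset.mem_compl.mpr h)
      rcases Finset.mem_union.mp this with h | h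
      · exact absurd h hvW
      · exact h
    apply le_antisymm
    · -- ≤ : conditioning upper bound
      rw [guessing_eq_sSup_gset G]
      apply Real.sSup_le
      · rintro x ⟨f, hIG, rfl⟩
        set base : (↥W → Fin q) → Fin n → Fin q :=
          fun c v => if h : v ∈ W then c ⟨v, h⟩ else d0 with hbase
        set glue : (↥W → Fin q) → (Fin m → Fin q) → Fin n → Fin q :=
          fun c z v => if h : v ∈ C then z (e ⟨v, h⟩)
            else if hw : v ∈ W then c ⟨v, hw⟩ else f (base c) v with hglue
        set F' : (↥W → Fin q) → (Fin m → Fin q) → Fin m → Fin q :=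
          fun c z j => f (glue c z) ↑(e.symm j) with hF'
        have hIG' : ∀ c, IGLe G' (F' c) := by
          intro c u' v' hdep
          obtain ⟨a, b, hab, hne2⟩ := hdep
          have hdiff : ∀ w : Fin n, w ≠ ↑(e.symm u') → glue c a w = glue c b w := by
            intro w hw
            by_cases hwC : w ∈ C
            · have hj : e ⟨w, hwC⟩ ≠ u' := by
                intro hcontra
                apply hw
                rw [← hcontra, Equiv.symm_apply_apply]
              simp only [hglue, dif_pos hwC]
              exact hab _ hj
            · simp only [hglue, dif_neg hwC]
          have hdep2 : EssDependsOn (fun x => f x ↑(e.symm v')) ↑(e.symm u') :=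
            ⟨glue c a, glue c b, hdiff, by simpa [hF'] using hne2⟩
          exact hIG _ _ hdep2
        have hDdet : ∀ p : Fin n → Fin q, f p = p → ∀ v ∈ D,
            p v = f (base fun w : ↥W => p ↑w) v := by
          intro p hp v hv
          have h1 : f p v = f (base fun w : ↥W => p ↑w) v := by
            apply locality (fun x => f x v) (· ∈ W)
            · intro u hu
              exact hDnbr v hv u (hIG u v hu)
            · intro w hwW
              simp [hbase, dif_pos hwW]
          calc p v = f p v := (congrFun hp v).symm
            _ = _ := h1
        set Φ : Finset (Fin n → Fin q) := Finset.univ.filter (fun p => f p = p) with hΦ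
        set Fixc : (↥W → Fin q) → Finset (Fin m → Fin q) :=
          fun c => Finset.univ.filter (fun z => F' c z = z) with hFixc
        have hfib : ∀ c : ↥W → Fin q,
            (Φ.filter fun p => (fun w : ↥W => p ↑w) = c).card ≤ (Fixc c).card := by
          intro c
          apply Finset.card_le_card_of_injOn (fun p => fun j : Fin m => p ↑(e.symm j))
          · intro p hp
            simp only [hΦ, Finset.mem_coe, Finset.mem_filter, Finset.mem_univ, true_and] at hp
            obtain ⟨hpfix, hpc⟩ := hp
            have hglue2 : glue c (fun j => p ↑(e.symm j)) = p := by
              funext v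
              by_cases hvC : v ∈ C
              · simp only [hglue, dif_pos hvC, Equiv.symm_apply_apply]
              · by_cases hvW : v ∈ W
                · simp only [hglue, dif_neg hvC, dif_pos hvW, ← hpc]
                · have hvD : v ∈ D := hD_of v hvC hvW
                  simp only [hglue, dif_neg hvC, dif_neg hvW]
                  rw [← hpc]
                  exact (hDdet p hpfix v hvD).symm
            simp only [hFixc, Finset.mem_coe, Finset.mem_filter, Finset.mem_univ, true_and]
            funext j
            simp only [hF', hglue2]
            exact congrFun hpfix _
          · intro p1 hp1 p2 hp2 himg
            simp only [Finset.coe_filter, Set.mem_setOf_eq, hΦ, Finset.mem_filter,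
              Finset.mem_univ, true_and] at hp1 hp2
            obtain ⟨hfix1, hc1⟩ := hp1
            obtain ⟨hfix2, hc2⟩ := hp2
            funext v
            by_cases hvC : v ∈ C
            · have h3 := congrFun himg (e ⟨v, hvC⟩)
              simpa [Equiv.symm_apply_apply] using h3
            · by_cases hvW : v ∈ W
              · have e1 : p1 v = c ⟨v, hvW⟩ := by rw [← hc1]
                have e2 : p2 v = c ⟨v, hvW⟩ := by rw [← hc2]
                rw [e1, e2]
              · have hvD : v ∈ D := hD_of v hvC hvW
                rw [hDdet p1 hfix1 v hvD, hDdet p2 hfix2 v hvD, hc1, hc2]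
        have hsum : Φ.card = ∑ c : ↥W → Fin q,
            (Φ.filter fun p => (fun w : ↥W => p ↑w) = c).card :=
          Finset.card_eq_sum_card_fiberwise (fun p _ => Finset.mem_univ _)
        have hNE : (Finset.univ : Finset (↥W → Fin q)).Nonempty :=
          ⟨fun _ => d0, Finset.mem_univ _⟩
        obtain ⟨c0, -, hc0⟩ :=
          Finset.exists_max_image Finset.univ (fun c : ↥W → Fin q => (Fixc c).card) hNE
        set B : ℕ := (Fixc c0).card with hB
        have hPhile : Φ.card ≤ q ^ W.card * B := by
          rw [hsum]
          calc ∑ c : ↥W → Fin q, (Φ.filter fun p => (fun w : ↥W => p ↑w) = c).card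
              ≤ ∑ _c : ↥W → Fin q, B := by
                apply Finset.sum_le_sum
                intro c _
                exact le_trans (hfib c) (hc0 c (Finset.mem_univ c))
            _ = q ^ W.card * B := by
                rw [Finset.sum_const, Finset.card_univ, smul_eq_mul]
                congr 1
                rw [Fintype.card_fun, Fintype.card_fin, Fintype.card_coe]
        have hBle : Real.logb q (B : ℝ) ≤ guessing G' q := by
          rw [guessing_eq_sSup_gset]
          apply le_csSup (bddAbove_gset G' hq)
          refine ⟨F' c0, hIG' c0, ?_⟩
          rw [ncard_fix_eq]
        have hxeq : Set.ncard {p : Fin n → Fin q | f p = p} = Φ.card := ncard_fix_eq f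
        rw [hxeq]
        rcases Nat.eq_zero_or_pos Φ.card with h0 | hpos
        · rw [h0]
          push_cast
          rw [Real.logb_zero]
          have h4 := guessing_nonneg G' hq
          have h5 : (0 : ℝ) ≤ (W.card : ℝ) := Nat.cast_nonneg _
          linarith
        · have hB1 : 0 < B := by
            rcases Nat.eq_zero_or_pos B with hB0 | h
            · rw [hB0, Nat.mul_zero] at hPhile
              exact absurd (Nat.le_zero.mp hPhile) (Nat.pos_iff_ne_zero.mp hpos)
            · exact h
          have hmono : Real.logb q (Φ.card : ℝ) ≤
              Real.logb q ((q : ℝ) ^ W.card * (B : ℝ)) := by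
            apply Real.logb_le_logb_of_le hq1 (by exact_mod_cast hpos)
            calc (Φ.card : ℝ) ≤ ((q ^ W.card * B : ℕ) : ℝ) := by exact_mod_cast hPhile
              _ = (q : ℝ) ^ W.card * (B : ℝ) := by push_cast; ring
          calc Real.logb q (Φ.card : ℝ) ≤ Real.logb q ((q : ℝ) ^ W.card * (B : ℝ)) := hmono
            _ = (W.card : ℝ) + Real.logb q (B : ℝ) := by
                rw [Real.logb_mul (by positivity) (by exact_mod_cast hB1.ne'),
                  Real.logb_pow, Real.logb_self_eq_one hq1, mul_one]
            _ ≤ (W.card : ℝ) + guessing G' q := by linarith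
      · have h4 := guessing_nonneg G' hq
        have h5 : (0 : ℝ) ≤ (W.card : ℝ) := Nat.cast_nonneg _
        linarith
    · -- ≥ : matching-protocol lower bound
      have hWle : ∀ y ∈ gset G' q, y + (W.card : ℝ) ≤ guessing G q := by
        rintro y ⟨f', hIG', rfl⟩
        set Φ' : Finset (Fin m → Fin q) := Finset.univ.filter (fun z => f' z = z) with hΦ'
        have hyeq : Set.ncard {p : Fin m → Fin q | f' p = p} = Φ'.card := ncard_fix_eq f'
        rcases Nat.eq_zero_or_pos Φ'.card with h0 | hpos
        · -- no fixed point: pure matching protocol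
          rw [hyeq, h0]
          push_cast
          rw [Real.logb_zero, zero_add]
          set F0 : (Fin n → Fin q) → Fin n → Fin q := fun x v =>
            if hW : v ∈ W then x (i ⟨v, hW⟩)
            else if hr : ∃ w : ↥W, i w = v then x ↑(hr.choose) else d0 with hF0
          have hIGF0 : IGLe G F0 := by
            rintro u v ⟨a, b, hab, hne2⟩
            by_cases hvW : v ∈ W
            · have hu : u = i ⟨v, hvW⟩ := by
                by_contra hcontra
                apply hne2
                simp only [hF0, dif_pos hvW]
                exact hab _ (fun h => hcontra h.symm)
              rw [hu]
              exact (hadj ⟨v, hvW⟩).symm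
            · by_cases hr : ∃ w : ↥W, i w = v
              · have hu : u = ↑(hr.choose) := by
                  by_contra hcontra
                  apply hne2
                  simp only [hF0, dif_neg hvW, dif_pos hr]
                  exact hab _ (fun h => hcontra h.symm)
                have h5 := hadj hr.choose
                rw [hr.choose_spec] at h5
                rw [hu]
                exact h5
              · exfalso
                apply hne2
                simp only [hF0, dif_neg hvW, dif_neg hr]
          have hcount : q ^ W.card ≤ (Finset.univ.filter fun p => F0 p = p).card := by
            have := Finset.card_le_card_of_injOn
              (f := fun c : ↥W → Fin q => (fun v : Fin n =>
                if hW : v ∈ W then c ⟨v, hW⟩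
                else if hr : ∃ w : ↥W, i w = v then c hr.choose else d0))
              (s := (Finset.univ : Finset (↥W → Fin q)))
              (t := Finset.univ.filter fun p => F0 p = p)
              ?_ ?_
            · calc q ^ W.card = (Finset.univ : Finset (↥W → Fin q)).card := by
                    rw [Finset.card_univ, Fintype.card_fun, Fintype.card_coe, Fintype.card_fin]
                _ ≤ _ := this
            · intro c _
              simp only [Finset.mem_coe, Finset.mem_filter, Finset.mem_univ, true_and]
              funext v
              by_cases hvW : v ∈ W
              · simp only [hF0, dif_pos hvW]
                have hiW : (i ⟨v, hvW⟩) ∉ W := hDW _ (hiD ⟨v, hvW⟩)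
                have hir : ∃ w : ↥W, i w = i ⟨v, hvW⟩ := ⟨⟨v, hvW⟩, rfl⟩
                rw [dif_neg hiW, dif_pos hir]
                have : hir.choose = ⟨v, hvW⟩ := hinj hir.choose_spec
                rw [this]
              · by_cases hr : ∃ w : ↥W, i w = v
                · simp only [hF0, dif_neg hvW, dif_pos hr]
                  rw [dif_pos (hr.choose).2]
                · simp only [hF0, dif_neg hvW, dif_neg hr]
            · intro c1 _ c2 _ himg
              funext w
              have h6 := congrFun himg ↑w
              simp only [dif_pos w.2] at h6
              simpa using h6
          calc (W.card : ℝ) = Real.logb q ((q : ℝ) ^ W.card) := by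
                rw [Real.logb_pow, Real.logb_self_eq_one hq1, mul_one]
            _ ≤ Real.logb q (((Finset.univ.filter fun p => F0 p = p).card : ℝ)) := by
                apply Real.logb_le_logb_of_le hq1 (by positivity)
                calc ((q : ℝ) ^ W.card) = ((q ^ W.card : ℕ) : ℝ) := by push_cast; ring
                  _ ≤ _ := by exact_mod_cast hcount
            _ ≤ guessing G q := by
                rw [guessing_eq_sSup_gset]
                apply le_csSup (bddAbove_gset G hq)
                exact ⟨F0, hIGF0, by rw [ncard_fix_eq]⟩
        · -- main protocol
          set F : (Fin n → Fin q) → Fin n → Fin q := fun x v =>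
            if hC : v ∈ C then f' (fun j => x ↑(e.symm j)) (e ⟨v, hC⟩)
            else if hW : v ∈ W then x (i ⟨v, hW⟩)
            else if hr : ∃ w : ↥W, i w = v then x ↑(hr.choose) else d0 with hF
          have hIGF : IGLe G F := by
            rintro u v ⟨a, b, hab, hne2⟩
            by_cases hvC : v ∈ C
            · by_cases huC : u ∈ C
              · have hdiff : ∀ j : Fin m, j ≠ e ⟨u, huC⟩ →
                    a ↑(e.symm j) = b ↑(e.symm j) := by
                  intro j hj
                  apply hab
                  intro hcontra
                  apply hj
                  have h7 : e.symm j = ⟨u, huC⟩ := Subtype.ext hcontra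
                  rw [← h7, Equiv.apply_symm_apply]
                have hdep' : EssDependsOn (fun z => f' z (e ⟨v, hvC⟩)) (e ⟨u, huC⟩) := by
                  refine ⟨fun j => a ↑(e.symm j), fun j => b ↑(e.symm j), hdiff, ?_⟩
                  intro hcontra
                  apply hne2
                  simp only [hF, dif_pos hvC]
                  exact hcontra
                have h8 := hIG' _ _ hdep'
                rw [hG'adj] at h8
                simpa [Equiv.symm_apply_apply] using h8
              · exfalso
                apply hne2
                simp only [hF, dif_pos hvC]
                congr 1
                funext j
                apply hab
                intro hcontra
                exact huC (hcontra ▸ (e.symm j).2)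
            · by_cases hvW : v ∈ W
              · have hu : u = i ⟨v, hvW⟩ := by
                  by_contra hcontra
                  apply hne2
                  simp only [hF, dif_neg hvC, dif_pos hvW]
                  exact hab _ (fun h => hcontra h.symm)
                rw [hu]
                exact (hadj ⟨v, hvW⟩).symm
              · by_cases hr : ∃ w : ↥W, i w = v
                · have hu : u = ↑(hr.choose) := by
                    by_contra hcontra
                    apply hne2
                    simp only [hF, dif_neg hvC, dif_neg hvW, dif_pos hr]
                    exact hab _ (fun h => hcontra h.symm)
                  have h5 := hadj hr.choose
                  rw [hr.choose_spec] at h5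
                  rw [hu]
                  exact h5
                · exfalso
                  apply hne2
                  simp only [hF, dif_neg hvC, dif_neg hvW, dif_neg hr]
          set J : (Fin m → Fin q) × (↥W → Fin q) → (Fin n → Fin q) := fun zc v =>
            if hC : v ∈ C then zc.1 (e ⟨v, hC⟩)
            else if hW : v ∈ W then zc.2 ⟨v, hW⟩
            else if hr : ∃ w : ↥W, i w = v then zc.2 hr.choose else d0 with hJ
          have hJC : ∀ zc, ∀ j : Fin m, J zc ↑(e.symm j) = zc.1 j := by
            intro zc j
            have hjC : (↑(e.symm j) : Fin n) ∈ C := (e.symm j).2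
            simp only [hJ, dif_pos hjC]
            rw [Subtype.coe_eta, Equiv.apply_symm_apply]
          have hJmem : ∀ zc ∈ Φ' ×ˢ (Finset.univ : Finset (↥W → Fin q)),
              J zc ∈ Finset.univ.filter fun p => F p = p := by
            rintro ⟨z, c⟩ hzc
            simp only [Finset.mem_product, hΦ', Finset.mem_filter, Finset.mem_univ,
              true_and, and_true] at hzc
            simp only [Finset.mem_filter, Finset.mem_univ, true_and]
            funext v
            by_cases hvC : v ∈ C
            · simp only [hF, dif_pos hvC]
              have hinner : (fun j => J (z, c) ↑(e.symm j)) = z := by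
                funext j
                exact hJC (z, c) j
              rw [hinner]
              have h9 : f' z (e ⟨v, hvC⟩) = z (e ⟨v, hvC⟩) := congrFun hzc _
              rw [h9]
              simp only [hJ, dif_pos hvC]
            · by_cases hvW : v ∈ W
              · simp only [hF, dif_neg hvC, dif_pos hvW]
                have hiD' := hiD ⟨v, hvW⟩
                have hiW : (i ⟨v, hvW⟩) ∉ W := hDW _ hiD'
                have hiC : (i ⟨v, hvW⟩) ∉ C := hAnotC _ (hDA _ hiD')
                have hir : ∃ w : ↥W, i w = i ⟨v, hvW⟩ := ⟨⟨v, hvW⟩, rfl⟩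
                simp only [hJ, dif_neg hiC, dif_neg hiW, dif_pos hir, dif_neg hvC,
                  dif_pos hvW]
                have : hir.choose = ⟨v, hvW⟩ := hinj hir.choose_spec
                rw [this]
              · by_cases hr : ∃ w : ↥W, i w = v
                · simp only [hF, dif_neg hvC, dif_neg hvW, dif_pos hr]
                  have hcW : (↑(hr.choose) : Fin n) ∈ W := (hr.choose).2
                  have hcC : (↑(hr.choose) : Fin n) ∉ C := hAnotC _ (hWA _ hcW)
                  simp only [hJ, dif_neg hcC, dif_pos hcW, dif_neg hvC, dif_neg hvW,
                    dif_pos hr]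
                · simp only [hF, hJ, dif_neg hvC, dif_neg hvW, dif_neg hr]
          have hJinj : Set.InjOn J ↑(Φ' ×ˢ (Finset.univ : Finset (↥W → Fin q))) := by
            rintro ⟨z1, c1⟩ _ ⟨z2, c2⟩ _ himg
            have hz : z1 = z2 := by
              funext j
              have h10 := congrFun himg ↑(e.symm j)
              rwa [hJC (z1, c1) j, hJC (z2, c2) j] at h10
            have hc : c1 = c2 := by
              funext w
              have hwW : (↑w : Fin n) ∈ W := w.2
              have hwC : (↑w : Fin n) ∉ C := hAnotC _ (hWA _ hwW)
              have h11 := congrFun himg ↑w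
              simp only [hJ, dif_neg hwC, dif_pos hwW, Subtype.coe_eta] at h11
              exact h11
            rw [Prod.ext_iff]
            exact ⟨hz, hc⟩
          have hcount : Φ'.card * q ^ W.card ≤
              (Finset.univ.filter fun p => F p = p).card := by
            calc Φ'.card * q ^ W.card
                = (Φ' ×ˢ (Finset.univ : Finset (↥W → Fin q))).card := by
                  rw [Finset.card_product, Finset.card_univ, Fintype.card_fun,
                    Fintype.card_coe, Fintype.card_fin]
              _ ≤ _ := Finset.card_le_card_of_injOn J hJmem hJinj
          rw [hyeq]
          have hpos' : (0 : ℝ) < (Φ'.card : ℝ) := by exact_mod_cast hpos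
          calc Real.logb q (Φ'.card : ℝ) + (W.card : ℝ)
              = Real.logb q ((Φ'.card : ℝ) * (q : ℝ) ^ W.card) := by
                rw [Real.logb_mul (by positivity) (by positivity),
                  Real.logb_pow, Real.logb_self_eq_one hq1, mul_one]
            _ ≤ Real.logb q (((Finset.univ.filter fun p => F p = p).card : ℝ)) := by
                apply Real.logb_le_logb_of_le hq1 (by positivity)
                calc (Φ'.card : ℝ) * (q : ℝ) ^ W.card
                    = ((Φ'.card * q ^ W.card : ℕ) : ℝ) := by push_cast; ring
                  _ ≤ _ := by exact_mod_cast hcount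
            _ ≤ guessing G q := by
                rw [guessing_eq_sSup_gset]
                apply le_csSup (bddAbove_gset G hq)
                exact ⟨F, hIGF, by rw [ncard_fix_eq]⟩
      have h0 : (0 : ℝ) + (W.card : ℝ) ≤ guessing G q := hWle 0 (zero_mem_gset G' hq0)
      have h1 : guessing G' q ≤ guessing G q - (W.card : ℝ) := by
        rw [guessing_eq_sSup_gset G']
        apply Real.sSup_le
        · intro y hy
          linarith [hWle y hy]
        · linarith
      linarith
  -- entropy equality
  have hent : graphEntropy G = (W.card : ℝ) + graphEntropy G' := by
    apply le_antisymm
    · rw [graphEntropy_eq_sSup_eset G]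
      apply Real.sSup_le
      · rintro x ⟨q, hq, rfl⟩
        rw [key q hq]
        have := guessing_le_graphEntropy G' hq
        linarith
      · have := graphEntropy_nonneg G'
        positivity
    · have h1 : graphEntropy G' ≤ graphEntropy G - (W.card : ℝ) := by
        rw [graphEntropy_eq_sSup_eset G']
        apply Real.sSup_le
        · rintro y ⟨q, hq, rfl⟩
          have h2 := key q hq
          have h3 := guessing_le_graphEntropy G hq
          linarith
        · have h2 := key 2 le_rfl
          have h3 := guessing_le_graphEntropy G (le_refl 2)
          have h4 := guessing_nonneg G' (le_refl 2)
          linarith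
      linarith
  have hfr : Int.fract (graphEntropy G') = Int.fract (graphEntropy G) := by
    rw [hent, show ((W.card : ℝ)) = ((W.card : ℤ) : ℝ) by push_cast; ring,
      Int.fract_intCast_add]
  exact hmin m hmn G' hfr


/-- The Hall-type induction: if every vertex of `U'` has all its neighbours inside `Z`,
`U'` is disjoint from `Z`, `U'` is nonempty and at least as large as `Z`, then the core
lemma yields a contradiction. -/
lemma hall_claim {n : ℕ} (G : SimpleGraph (Fin n)) (hmin : EntropyMinimal G) :
    ∀ (k : ℕ) (Z U' : Finset (Fin n)), Z.card ≤ k →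
      U'.Nonempty → Z.card ≤ U'.card →
      (∀ u ∈ U', u ∉ Z) →
      (∀ u ∈ U', ∀ v : Fin n, G.Adj v u → v ∈ Z) → False := by
  classical
  intro k
  induction k with
  | zero =>
    intro Z U' hZk hU'ne hZU hdisj hnbr
    -- Z is empty; core applies with W = ∅, D = U'
    have hZ0 : Z = ∅ := Finset.card_eq_zero.mp (Nat.le_zero.mp hZk)
    subst hZ0
    refine core G hmin ∅ U' ?_ ?_ ?_
      (fun w => absurd w.2 (Finset.notMem_empty _)) ?_ ?_ ?_
    · intro d hd
      simp
    · intro d hd v hv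
      exact hnbr d hd v hv
    · simpa using hU'ne
    · intro w; exact absurd w.2 (Finset.notMem_empty _)
    · intro w; exact absurd w.2 (Finset.notMem_empty _)
    · intro w; exact absurd w.2 (Finset.notMem_empty _)
  | succ k ih =>
    intro Z U' hZk hU'ne hZU hdisj hnbr
    set t : ↥Z → Finset (Fin n) := fun z => U'.filter (fun u => G.Adj ↑z u) with ht
    by_cases hHall : ∀ s : Finset ↥Z, s.card ≤ (s.biUnion t).card
    · obtain ⟨i, hinj, hit⟩ := (Finset.all_card_le_biUnion_card_iff_exists_injective t).mp hHall
      refine core G hmin Z U' ?_ ?_ ?_ i hinj ?_ ?_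
      · intro d hd
        exact hdisj d hd
      · intro d hd v hv
        exact hnbr d hd v hv
      · rcases hU'ne with ⟨u, hu⟩
        exact ⟨u, Finset.mem_union_right _ hu⟩
      · intro w
        have := hit w
        rw [ht] at this
        simp only [Finset.mem_filter] at this
        exact this.1
      · intro w
        have := hit w
        rw [ht] at this
        simp only [Finset.mem_filter] at this
        exact this.2
    · push_neg at hHall
      obtain ⟨s, hs⟩ := hHall
      set Y : Finset (Fin n) := s.image (fun z : ↥Z => (z : Fin n)) with hY
      set NY : Finset (Fin n) := s.biUnion t with hNY
      have hYcard : Y.card = s.card := Finset.card_image_of_injective _ Subtype.coe_injective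
      have hYZ : Y ⊆ Z := by
        intro v hv
        rw [hY] at hv
        obtain ⟨z, _, rfl⟩ := Finset.mem_image.mp hv
        exact z.2
      have hsne : 0 < s.card := lt_of_le_of_lt (Nat.zero_le _) hs
      have hNYU : NY ⊆ U' := by
        intro u hu
        rw [hNY] at hu
        obtain ⟨z, _, hz⟩ := Finset.mem_biUnion.mp hu
        rw [ht] at hz
        exact (Finset.mem_filter.mp hz).1
      -- recurse on Z \ Y and U' \ NY
      set Z'' : Finset (Fin n) := Z \ Y with hZ''
      set U'' : Finset (Fin n) := U' \ NY with hU''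
      have hZ''card : Z''.card = Z.card - Y.card := Finset.card_sdiff_of_subset hYZ
      have hU''card : U'.card - NY.card ≤ U''.card := Finset.le_card_sdiff _ _
      have hkey : Z''.card + 1 ≤ U''.card := by
        have h1 : NY.card + 1 ≤ s.card := hs
        have h2 : Y.card ≤ Z.card := Finset.card_le_card hYZ
        have h3 : NY.card ≤ U'.card := Finset.card_le_card hNYU
        omega
      have hU''ne : U''.Nonempty := Finset.card_pos.mp (by omega)
      have hZ''k : Z''.card ≤ k := by omega
      apply ih Z'' U'' hZ''k hU''ne (by omega)
      · intro u hu
        rw [hU''] at hu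
        have hu' : u ∈ U' := (Finset.mem_sdiff.mp hu).1
        intro hcontra
        rw [hZ''] at hcontra
        exact hdisj u hu' (Finset.mem_sdiff.mp hcontra).1
      · intro u hu v hv
        rw [hU''] at hu
        obtain ⟨hu1, hu2⟩ := Finset.mem_sdiff.mp hu
        rw [hZ'']
        rw [Finset.mem_sdiff]
        refine ⟨hnbr u hu1 v hv, ?_⟩
        intro hvY
        -- then u ∈ NY, contradiction
        rw [hY] at hvY
        obtain ⟨z, hzs, hzv⟩ := Finset.mem_image.mp hvY
        apply hu2
        rw [hNY]
        rw [Finset.mem_biUnion]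
        refine ⟨z, hzs, ?_⟩
        rw [ht]
        rw [Finset.mem_filter]
        exact ⟨hu1, by rw [hzv]; exact hv⟩

end AuxEntropyMachinery


/-- If `G` is entropy-minimal with `h - 1 < H(G) < h` and `M` is the vertex set of a maximum
matching of `G`, then the number of vertices outside `M` is smaller than `|M|`; in particular
`G` has fewer than `2|M|` vertices. -/
theorem entropyMinimal_few_unmatched_vertices {n : ℕ} (h : ℕ) (hh : 0 < h)
    (G : SimpleGraph (Fin n)) (hmin : EntropyMinimal G)
    (h1 : (h : ℝ) - 1 < graphEntropy G) (h2 : graphEntropy G < (h : ℝ))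
    (M : G.Subgraph) (hM : M.IsMatching)
    (hmax : ∀ M' : G.Subgraph, M'.IsMatching → M'.verts.ncard ≤ M.verts.ncard) :
    (M.vertsᶜ).ncard < M.verts.ncard ∧ n < 2 * M.verts.ncard := by
  classical
  -- n = 0 is impossible
  rcases Nat.eq_zero_or_pos n with hn0 | hn
  · exfalso
    subst hn0
    rw [graphEntropy_fin_zero G] at h1 h2
    have : (1 : ℝ) ≤ (h : ℝ) := by exact_mod_cast hh
    linarith
  -- independence of the unmatched vertices
  have hindep : ∀ u v : Fin n, u ∉ M.verts → v ∉ M.verts → ¬ G.Adj u v := by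
    intro u v hu hv hadj
    have huv : u ≠ v := G.ne_of_adj hadj
    set M' : G.Subgraph := M ⊔ G.subgraphOfAdj hadj with hM'
    have hM'verts : M'.verts = M.verts ∪ {u, v} := rfl
    have hM'match : M'.IsMatching := by
      intro x hx
      rw [hM'verts] at hx
      rcases hx with hxM | hxuv
      · obtain ⟨y, hy, hyu⟩ := hM hxM
        refine ⟨y, Or.inl hy, ?_⟩
        rintro y' (hy' | hy')
        · exact hyu y' hy'
        · exfalso
          rw [SimpleGraph.subgraphOfAdj_adj] at hy'
          rw [Sym2.eq_iff] at hy'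
          rcases hy' with ⟨hh1, hh2⟩ | ⟨hh1, hh2⟩
          · exact hu (by rw [hh1]; exact hxM)
          · exact hv (by rw [hh2]; exact hxM)
      · rcases hxuv with rfl | rfl
        · refine ⟨v, Or.inr ?_, ?_⟩
          · rw [SimpleGraph.subgraphOfAdj_adj]
          · rintro y' (hy' | hy')
            · exact absurd (hy'.fst_mem) hu
            · rw [SimpleGraph.subgraphOfAdj_adj, Sym2.eq_iff] at hy'
              rcases hy' with ⟨hh1, hh2⟩ | ⟨hh1, hh2⟩
              · exact hh2.symm
              · exact absurd hh2.symm huv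
        · refine ⟨u, Or.inr ?_, ?_⟩
          · rw [SimpleGraph.subgraphOfAdj_adj]
            rw [Sym2.eq_swap]
          · rintro y' (hy' | hy')
            · exact absurd (hy'.fst_mem) hv
            · rw [SimpleGraph.subgraphOfAdj_adj, Sym2.eq_iff] at hy'
              rcases hy' with ⟨hh1, hh2⟩ | ⟨hh1, hh2⟩
              · exact absurd hh1 huv
              · exact hh1.symm
    have hcard := hmax M' hM'match
    rw [hM'verts] at hcard
    have hdisj : Disjoint M.verts ({u, v} : Set (Fin n)) := by
      rw [Set.disjoint_right]
      rintro x (rfl | rfl)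
      · exact hu
      · exact hv
    rw [Set.ncard_union_eq hdisj (Set.toFinite _) (Set.toFinite _), Set.ncard_pair huv] at hcard
    omega
  -- Finset versions
  set MF : Finset (Fin n) := (Set.toFinite M.verts).toFinset with hMF
  have hMFmem : ∀ v : Fin n, v ∈ MF ↔ v ∈ M.verts := by
    intro v; rw [hMF, Set.Finite.mem_toFinset]
  have hMcard : M.verts.ncard = MF.card := by
    rw [hMF]; exact Set.ncard_eq_toFinset_card _ _
  have hUcard : (M.vertsᶜ).ncard = MFᶜ.card := by
    rw [show M.vertsᶜ = ↑(MFᶜ) by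
      ext v; simp [hMFmem v, Finset.mem_compl]]
    exact Set.ncard_coe_finset _
  suffices hU : (M.vertsᶜ).ncard < M.verts.ncard by
    refine ⟨hU, ?_⟩
    have hsum : MFᶜ.card + MF.card = n := by
      have h3 := Finset.card_le_univ MF
      rw [Fintype.card_fin] at h3
      rw [Finset.card_compl, Fintype.card_fin]
      omega
    rw [hUcard, hMcard] at hU
    rw [hMcard]
    omega
  by_contra hge
  push_neg at hge
  rw [hUcard, hMcard] at hge
  -- the unmatched set
  set UF : Finset (Fin n) := MFᶜ with hUF
  have hUFne : UF.Nonempty := by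
    rw [← Finset.card_pos]
    have hMn : MF.card ≤ n := by
      have h3 := Finset.card_le_univ MF
      rwa [Fintype.card_fin] at h3
    rcases Nat.eq_zero_or_pos UF.card with h0 | hpos
    · exfalso
      -- M.verts = univ, so ncard compl = 0 < ncard; contradiction with hge
      rw [hUF] at h0
      have : MF.card = n := by
        rw [Finset.card_compl, Fintype.card_fin] at h0
        omega
      rw [h0, this] at hge
      omega
    · exact hpos
  set Z : Finset (Fin n) := UF.biUnion (fun u => G.neighborFinset u) with hZ
  have hZM : Z ⊆ MF := by
    intro v hv
    rw [hZ] at hv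
    obtain ⟨u, hu, hv'⟩ := Finset.mem_biUnion.mp hv
    rw [SimpleGraph.mem_neighborFinset] at hv'
    rw [hMFmem]
    by_contra hvM
    have huM : u ∉ M.verts := by
      rw [hUF, Finset.mem_compl, hMFmem] at hu
      exact hu
    exact hindep u v huM hvM hv'
  have hdisjZ : ∀ u ∈ UF, u ∉ Z := by
    intro u hu hcontra
    have := hZM hcontra
    rw [hUF, Finset.mem_compl] at hu
    exact hu this
  have hnbrZ : ∀ u ∈ UF, ∀ v : Fin n, G.Adj v u → v ∈ Z := by
    intro u hu v hv
    rw [hZ, Finset.mem_biUnion]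
    exact ⟨u, hu, by rw [SimpleGraph.mem_neighborFinset]; exact hv.symm⟩
  have hZle : Z.card ≤ UF.card := le_trans (Finset.card_le_card hZM) hge
  exact hall_claim G hmin Z.card Z UF le_rfl hUFne hZle hdisjZ hnbrZ


end
end

section
/- Let G be a simple graph on six vertices v₁,…,v₆ such that the subgraph induced on {v₁,…,v₅} is the 5-cycle v₁v₂v₃v₄v₅ and every edge of G not inside {v₁,…,v₅} is incident to v₆. Then: H(G) = 5/2 if v₆ is isolated; H(G) = 7/2 if the neighbourhood of v₆ contains three consecutive vertices of the 5-cycle; and H(G) = 3 otherwise. -/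
noncomputable section

open Finset Real
set_option linter.unusedSectionVars false

namespace GEnt

variable {γ β β₁ β₂ β₃ : Type*} [DecidableEq γ] [DecidableEq β] [DecidableEq β₁]
  [DecidableEq β₂] [DecidableEq β₃]

/-- fiber count of `x` in `S` under `φ`. -/
noncomputable def fib (S : Finset γ) (φ : γ → β) (x : γ) : ℕ :=
  (S.filter fun y => φ y = φ x).card

/-- `∑_{x ∈ S} log (fiber size of x)`. -/
noncomputable def W (S : Finset γ) (φ : γ → β) : ℝ :=
  ∑ x ∈ S, Real.log (fib S φ x)

lemma fib_pos {S : Finset γ} {φ : γ → β} {x : γ} (hx : x ∈ S) : 0 < fib S φ x :=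
  Finset.card_pos.2 ⟨x, by simp [hx]⟩

lemma fib_congr {S : Finset γ} {φ : γ → β} {x y : γ} (h : φ x = φ y) :
    fib S φ x = fib S φ y := by
  unfold fib; rw [h]

lemma W_congr {S : Finset γ} {φ : γ → β₁} {ψ : γ → β₂}
    (h : ∀ x ∈ S, ∀ y ∈ S, (φ x = φ y ↔ ψ x = ψ y)) : W S φ = W S ψ := by
  apply Finset.sum_congr rfl
  intro x hx
  congr 2
  apply Finset.card_bij (fun a _ => a)
  · intro a ha
    simp only [mem_filter] at ha ⊢
    exact ⟨ha.1, (h a ha.1 x hx).1 ha.2⟩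
  · intro a _ b _ hab; exact hab
  · intro a ha
    simp only [mem_filter] at ha
    exact ⟨a, by simp [ha.1, (h a ha.1 x hx).2 ha.2]⟩

lemma W_eq_zero {S : Finset γ} {φ : γ → β}
    (h : ∀ x ∈ S, ∀ y ∈ S, φ x = φ y → x = y) : W S φ = 0 := by
  apply Finset.sum_eq_zero
  intro x hx
  have : (S.filter fun y => φ y = φ x) = {x} := by
    ext y
    simp only [mem_filter, mem_singleton]
    constructor
    · rintro ⟨hy, hxy⟩; exact h y hy x hx hxy
    · rintro rfl; exact ⟨hx, rfl⟩
  simp [fib, this]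

/-- Jensen: `∑ log t ≤ n log (C/n)` when `t > 0` and `∑ t ≤ C`. -/
lemma sum_log_le {F : Finset γ} (hF : F.Nonempty) {t : γ → ℝ}
    (ht : ∀ x ∈ F, 0 < t x) {C : ℝ} (hC : ∑ x ∈ F, t x ≤ C) :
    ∑ x ∈ F, Real.log (t x) ≤ F.card * Real.log (C / F.card) := by
  have hn : (0:ℝ) < F.card := by exact_mod_cast Finset.card_pos.2 hF
  have hJ := strictConcaveOn_log_Ioi.concaveOn.le_map_sum (t := F)
      (w := fun _ => ((F.card : ℝ))⁻¹) (p := t)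
      (fun i _ => by positivity)
      (by rw [Finset.sum_const, nsmul_eq_mul, mul_inv_cancel₀ hn.ne'])
      (fun i hi => ht i hi)
  simp only [smul_eq_mul, ← Finset.sum_div, inv_mul_eq_div] at hJ
  have hsum : (0:ℝ) < ∑ x ∈ F, t x := by
    obtain ⟨x, hx⟩ := hF
    exact Finset.sum_pos' (fun i hi => (ht i hi).le) ⟨x, hx, ht x hx⟩
  have hlog : Real.log ((∑ i ∈ F, t i) / F.card) ≤ Real.log (C / F.card) :=
    Real.log_le_log (div_pos hsum hn) (by gcongr)
  calc ∑ x ∈ F, Real.log (t x) = F.card * ((∑ x ∈ F, Real.log (t x)) / F.card) := by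
        field_simp
    _ ≤ F.card * Real.log (C / F.card) := by
        apply mul_le_mul_of_nonneg_left _ hn.le
        exact le_trans hJ hlog

/-- decomposition of cardinality along fibers. -/
lemma sum_fib_card (F : Finset γ) (φ : γ → β) :
    ∑ u ∈ F.image φ, ((F.filter fun y => φ y = u).card : ℝ) = (F.card : ℝ) := by
  have := Finset.sum_fiberwise_of_maps_to (g := φ) (t := F.image φ)
      (fun x hx => Finset.mem_image_of_mem φ hx) (fun _ => (1:ℝ))
  simpa [Finset.sum_const] using this

/-- The key per-fiber inequality (mutual information is nonnegative). -/
lemma per_fiber {F : Finset γ} (hF : F.Nonempty) (φ : γ → β₁) (ψ : γ → β₂) :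
    ∑ x ∈ F, Real.log ((fib F φ x * fib F ψ x : ℝ) /
      (fib F (fun z => (φ z, ψ z)) x * F.card)) ≤ 0 := by
  set pair := fun z => (φ z, ψ z) with hpair
  have hn : (0:ℝ) < F.card := by exact_mod_cast Finset.card_pos.2 hF
  have ht : ∀ x ∈ F, (0:ℝ) < (fib F φ x * fib F ψ x : ℝ) / (fib F pair x * F.card) := by
    intro x hx
    have h1 := fib_pos (φ := φ) hx; have h2 := fib_pos (φ := ψ) hx
    have h3 := fib_pos (φ := pair) hx
    positivity
  -- key sum bound
  have hC : ∑ x ∈ F, (fib F φ x * fib F ψ x : ℝ) / (fib F pair x * F.card) ≤ F.card := by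
    rw [← Finset.sum_fiberwise_of_maps_to (g := pair) (t := F.image pair)
      (fun x hx => Finset.mem_image_of_mem pair hx)]
    have hinner : ∀ p ∈ F.image pair,
        ∑ x ∈ F.filter (fun y => pair y = p),
          (fib F φ x * fib F ψ x : ℝ) / (fib F pair x * F.card)
        = ((F.filter fun y => φ y = p.1).card * (F.filter fun y => ψ y = p.2).card : ℝ)
            / F.card := by
      intro p hp
      obtain ⟨x₀, hx₀, hpx₀⟩ := Finset.mem_image.1 hp
      have hcardpos : (0:ℝ) < ((F.filter fun y => pair y = p).card : ℝ) := by
        exact_mod_cast Finset.card_pos.2 ⟨x₀, by simp [hx₀, hpx₀]⟩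
      have : ∀ x ∈ F.filter (fun y => pair y = p),
          (fib F φ x * fib F ψ x : ℝ) / (fib F pair x * F.card)
          = ((F.filter fun y => φ y = p.1).card * (F.filter fun y => ψ y = p.2).card : ℝ)
            / (((F.filter fun y => pair y = p).card : ℝ) * F.card) := by
        intro x hx
        rw [Finset.mem_filter] at hx
        have hφ : φ x = p.1 := by rw [← hx.2]
        have hψ : ψ x = p.2 := by rw [← hx.2]
        have e1 : fib F φ x = (F.filter fun y => φ y = p.1).card := by
          unfold fib; rw [hφ]
        have e2 : fib F ψ x = (F.filter fun y => ψ y = p.2).card := by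
          unfold fib; rw [hψ]
        have e3 : fib F pair x = (F.filter fun y => pair y = p).card := by
          unfold fib; rw [hx.2]
        rw [e1, e2, e3]
      rw [Finset.sum_congr rfl this, Finset.sum_const, nsmul_eq_mul]
      field_simp
    rw [Finset.sum_congr rfl hinner, ← Finset.sum_div]
    rw [div_le_iff₀ hn]
    calc ∑ p ∈ F.image pair,
          ((F.filter fun y => φ y = p.1).card * (F.filter fun y => ψ y = p.2).card : ℝ)
        ≤ ∑ p ∈ (F.image φ) ×ˢ (F.image ψ),
          ((F.filter fun y => φ y = p.1).card * (F.filter fun y => ψ y = p.2).card : ℝ) := by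
          apply Finset.sum_le_sum_of_subset_of_nonneg
          · intro p hp
            obtain ⟨x₀, hx₀, hpx₀⟩ := Finset.mem_image.1 hp
            rw [Finset.mem_product]
            exact ⟨by rw [← hpx₀]; exact Finset.mem_image_of_mem φ hx₀,
                   by rw [← hpx₀]; exact Finset.mem_image_of_mem ψ hx₀⟩
          · intro p _ _; positivity
        _ = (∑ u ∈ F.image φ, ((F.filter fun y => φ y = u).card : ℝ)) *
            (∑ v ∈ F.image ψ, ((F.filter fun y => ψ y = v).card : ℝ)) := by
          rw [Finset.sum_product]
          rw [Finset.sum_mul_sum]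
        _ = (F.card : ℝ) * F.card := by rw [sum_fib_card, sum_fib_card]
  calc ∑ x ∈ F, Real.log ((fib F φ x * fib F ψ x : ℝ) / (fib F pair x * F.card))
      ≤ F.card * Real.log ((F.card : ℝ) / F.card) := sum_log_le hF ht hC
    _ = 0 := by rw [div_self hn.ne', Real.log_one, mul_zero]

end GEnt

namespace GEnt

variable {γ β β₁ β₂ β₃ : Type*} [DecidableEq γ] [DecidableEq β] [DecidableEq β₁]
  [DecidableEq β₂] [DecidableEq β₃]

lemma W_submod (S : Finset γ) (φ : γ → β₁) (ψ : γ → β₂) (χ : γ → β₃)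
    (hφ : ∀ x ∈ S, ∀ y ∈ S, φ x = φ y → χ x = χ y)
    (hψ : ∀ x ∈ S, ∀ y ∈ S, ψ x = ψ y → χ x = χ y) :
    W S φ + W S ψ ≤ W S (fun z => (φ z, ψ z)) + W S χ := by
  set pair := fun z => (φ z, ψ z) with hpair
  have key : ∑ x ∈ S, (Real.log (fib S φ x) + Real.log (fib S ψ x)
      - Real.log (fib S pair x) - Real.log (fib S χ x)) ≤ 0 := by
    rw [← Finset.sum_fiberwise_of_maps_to (g := χ) (t := S.image χ)
        (fun x hx => Finset.mem_image_of_mem χ hx)]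
    apply Finset.sum_nonpos
    intro j hj
    obtain ⟨x₀, hx₀, hjx₀⟩ := Finset.mem_image.1 hj
    set F := S.filter (fun y => χ y = j) with hFdef
    have hFne : F.Nonempty := ⟨x₀, by simp [hFdef, hx₀, hjx₀]⟩
    have hFsub : ∀ x ∈ F, x ∈ S := fun x hx => (Finset.mem_filter.1 hx).1
    have hFj : ∀ x ∈ F, χ x = j := fun x hx => (Finset.mem_filter.1 hx).2
    have ea : ∀ x ∈ F, fib S φ x = fib F φ x := by
      intro x hx
      unfold fib
      congr 1
      ext y
      simp only [Finset.mem_filter, hFdef]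
      constructor
      · rintro ⟨hyS, hyx⟩
        exact ⟨⟨hyS, (hφ y hyS x (hFsub x hx) hyx).trans (hFj x hx)⟩, hyx⟩
      · rintro ⟨⟨hyS, _⟩, hyx⟩; exact ⟨hyS, hyx⟩
    have eb : ∀ x ∈ F, fib S ψ x = fib F ψ x := by
      intro x hx
      unfold fib
      congr 1
      ext y
      simp only [Finset.mem_filter, hFdef]
      constructor
      · rintro ⟨hyS, hyx⟩
        exact ⟨⟨hyS, (hψ y hyS x (hFsub x hx) hyx).trans (hFj x hx)⟩, hyx⟩
      · rintro ⟨⟨hyS, _⟩, hyx⟩; exact ⟨hyS, hyx⟩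
    have ec : ∀ x ∈ F, fib S pair x = fib F pair x := by
      intro x hx
      unfold fib
      congr 1
      ext y
      simp only [Finset.mem_filter, hFdef]
      constructor
      · rintro ⟨hyS, hyx⟩
        have hyx' : φ y = φ x := congrArg Prod.fst hyx
        exact ⟨⟨hyS, (hφ y hyS x (hFsub x hx) hyx').trans (hFj x hx)⟩, hyx⟩
      · rintro ⟨⟨hyS, _⟩, hyx⟩; exact ⟨hyS, hyx⟩
    have em : ∀ x ∈ F, fib S χ x = F.card := by
      intro x hx
      have hfe : (S.filter fun y => χ y = χ x) = F := by
        rw [hFdef]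
        apply Finset.filter_congr
        intro y _
        simp [hFj x hx]
      simp [fib, hfe]
    have hrw : ∀ x ∈ F, (Real.log (fib S φ x) + Real.log (fib S ψ x)
        - Real.log (fib S pair x) - Real.log (fib S χ x))
        = Real.log ((fib F φ x * fib F ψ x : ℝ) / (fib F pair x * F.card)) := by
      intro x hx
      have p1 : (0:ℝ) < (fib F φ x : ℝ) := by exact_mod_cast fib_pos hx
      have p2 : (0:ℝ) < (fib F ψ x : ℝ) := by exact_mod_cast fib_pos hx
      have p3 : (0:ℝ) < (fib F pair x : ℝ) := by exact_mod_cast fib_pos hx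
      have pn : (0:ℝ) < (F.card : ℝ) := by exact_mod_cast Finset.card_pos.2 hFne
      rw [ea x hx, eb x hx, ec x hx, em x hx]
      rw [Real.log_div (mul_ne_zero p1.ne' p2.ne') (mul_ne_zero p3.ne' pn.ne'),
        Real.log_mul p1.ne' p2.ne', Real.log_mul p3.ne' pn.ne']
      ring
    rw [Finset.sum_congr rfl hrw]
    exact per_fiber hFne φ ψ
  have expand : W S φ + W S ψ - W S pair - W S χ
      = ∑ x ∈ S, (Real.log (fib S φ x) + Real.log (fib S ψ x)
        - Real.log (fib S pair x) - Real.log (fib S χ x)) := by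
    simp only [W, ← Finset.sum_add_distrib, ← Finset.sum_sub_distrib]
  linarith [key, expand.symm ▸ key]

/-- `∑_{x∈S} 1/(fiber size) = number of fibers`. -/
lemma sum_inv_fib (S : Finset γ) (φ : γ → β) :
    ∑ x ∈ S, ((fib S φ x : ℝ))⁻¹ = ((S.image φ).card : ℝ) := by
  rw [← Finset.sum_fiberwise_of_maps_to (g := φ) (t := S.image φ)
      (fun x hx => Finset.mem_image_of_mem φ hx)]
  rw [Finset.card_eq_sum_ones (S.image φ)]
  push_cast
  apply Finset.sum_congr rfl
  intro j hj
  obtain ⟨x₀, hx₀, hjx₀⟩ := Finset.mem_image.1 hj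
  have hpos : 0 < (S.filter fun y => φ y = j).card :=
    Finset.card_pos.2 ⟨x₀, by simp [hx₀, hjx₀]⟩
  have : ∀ x ∈ S.filter (fun y => φ y = j), ((fib S φ x : ℝ))⁻¹
      = (((S.filter fun y => φ y = j).card : ℝ))⁻¹ := by
    intro x hx
    rw [Finset.mem_filter] at hx
    unfold fib
    rw [hx.2]
  rw [Finset.sum_congr rfl this, Finset.sum_const, nsmul_eq_mul]
  rw [mul_inv_cancel₀]
  exact_mod_cast hpos.ne'

/-- Entropy of a single observable is at most `log` of the number of values. -/
lemma card_log_sub_W_le (S : Finset γ) (hS : S.Nonempty) (φ : γ → β) (k : ℕ)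
    (hk : (S.image φ).card ≤ k) :
    (S.card : ℝ) * Real.log S.card - W S φ ≤ (S.card : ℝ) * Real.log k := by
  have hN : (0:ℝ) < S.card := by exact_mod_cast Finset.card_pos.2 hS
  have hkpos : 0 < k := lt_of_lt_of_le (Finset.card_pos.2 (hS.image φ)) hk
  have ht : ∀ x ∈ S, (0:ℝ) < (S.card : ℝ) / (fib S φ x) := by
    intro x hx
    have := fib_pos (φ := φ) hx
    have : (0:ℝ) < (fib S φ x : ℝ) := by exact_mod_cast this
    positivity
  have hC : ∑ x ∈ S, (S.card : ℝ) / (fib S φ x) ≤ (S.card : ℝ) * k := by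
    have : ∑ x ∈ S, (S.card : ℝ) / (fib S φ x)
        = (S.card : ℝ) * ∑ x ∈ S, ((fib S φ x : ℝ))⁻¹ := by
      rw [Finset.mul_sum]
      apply Finset.sum_congr rfl
      intro x _
      rw [div_eq_mul_inv]
    rw [this, sum_inv_fib]
    have : ((S.image φ).card : ℝ) ≤ (k : ℝ) := by exact_mod_cast hk
    nlinarith
  have hmain := sum_log_le hS ht hC
  have hre : ∀ x ∈ S, Real.log ((S.card : ℝ) / (fib S φ x))
      = Real.log S.card - Real.log (fib S φ x) := by
    intro x hx
    have hp : (0:ℝ) < (fib S φ x : ℝ) := by exact_mod_cast fib_pos hx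
    rw [Real.log_div hN.ne' hp.ne']
  rw [Finset.sum_congr rfl hre, Finset.sum_sub_distrib, Finset.sum_const, nsmul_eq_mul] at hmain
  have harg : ((S.card : ℝ) * k) / (S.card : ℝ) = (k : ℝ) := by field_simp
  rw [harg] at hmain
  unfold W
  linarith

end GEnt

namespace GEnt

variable {q : ℕ}

/-- Projection of a tuple onto a set of coordinates. -/
noncomputable def msk (A : Finset (Fin 5)) (x : Fin 5 → Fin q) : Fin 5 → Option (Fin q) :=
  fun i => if i ∈ A then some (x i) else none

lemma msk_eq_iff {A : Finset (Fin 5)} {x y : Fin 5 → Fin q} :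
    msk A x = msk A y ↔ ∀ i ∈ A, x i = y i := by
  constructor
  · intro h i hi
    have := congrFun h i
    simpa [msk, hi] using this
  · intro h
    funext i
    by_cases hi : i ∈ A
    · simp [msk, hi, h i hi]
    · simp [msk, hi]

section C5

variable (S : Finset (Fin 5 → Fin q))

/-- Submodularity for coordinate sets. -/
lemma msk_submod (A B : Finset (Fin 5)) :
    W S (msk A) + W S (msk B) ≤ W S (msk (A ∪ B)) + W S (msk (A ∩ B)) := by
  have hφ : ∀ x ∈ S, ∀ y ∈ S, msk A x = msk A y → msk (A ∩ B) x = msk (A ∩ B) y := by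
    intro x _ y _ h
    rw [msk_eq_iff] at h ⊢
    intro i hi
    exact h i (Finset.mem_inter.1 hi).1
  have hψ : ∀ x ∈ S, ∀ y ∈ S, msk B x = msk B y → msk (A ∩ B) x = msk (A ∩ B) y := by
    intro x _ y _ h
    rw [msk_eq_iff] at h ⊢
    intro i hi
    exact h i (Finset.mem_inter.1 hi).2
  have hpair : W S (fun z => (msk A z, msk B z)) = W S (msk (A ∪ B)) := by
    apply W_congr
    intro x _ y _
    constructor
    · intro h
      have h1 : msk A x = msk A y := congrArg Prod.fst h
      have h2 : msk B x = msk B y := congrArg Prod.snd h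
      rw [msk_eq_iff] at h1 h2 ⊢
      intro i hi
      rcases Finset.mem_union.1 hi with hA | hB
      · exact h1 i hA
      · exact h2 i hB
    · intro h
      rw [msk_eq_iff] at h
      have h1 : msk A x = msk A y := by
        rw [msk_eq_iff]; exact fun i hi => h i (Finset.mem_union_left _ hi)
      have h2 : msk B x = msk B y := by
        rw [msk_eq_iff]; exact fun i hi => h i (Finset.mem_union_right _ hi)
      rw [h1, h2]
  have := W_submod S (msk A) (msk B) (msk (A ∩ B)) hφ hψ
  rw [hpair] at this
  exact this

lemma msk_empty : W S (msk ∅) = (S.card : ℝ) * Real.log S.card := by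
  have h : ∀ x ∈ S, fib S (msk (q := q) ∅) x = S.card := by
    intro x _
    unfold fib
    have : (S.filter fun y => msk (q := q) ∅ y = msk ∅ x) = S := by
      apply Finset.filter_true_of_mem
      intro y _
      rw [msk_eq_iff]
      intro i hi
      simp at hi
    rw [this]
  unfold W
  rw [Finset.sum_congr rfl (fun x hx => by rw [h x hx])]
  rw [Finset.sum_const, nsmul_eq_mul]

lemma msk_full : W S (msk Finset.univ) = 0 := by
  apply W_eq_zero
  intro x _ y _ h
  rw [msk_eq_iff] at h
  funext i
  exact h i (Finset.mem_univ i)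

lemma msk_single_le (hq : 0 < q) (hS : S.Nonempty) (i : Fin 5) :
    (S.card : ℝ) * Real.log S.card - W S (msk {i}) ≤ (S.card : ℝ) * Real.log q := by
  apply card_log_sub_W_le S hS (msk {i}) q
  have : (S.image (msk {i})).card ≤ (Finset.univ : Finset (Fin q)).card := by
    apply Finset.card_le_card_of_injOn (fun g => (g i).getD ⟨0, hq⟩)
    · intro g _; exact Finset.mem_univ _
    · intro g1 hg1 g2 hg2 heq
      obtain ⟨x, _, rfl⟩ := Finset.mem_image.1 hg1
      obtain ⟨y, _, rfl⟩ := Finset.mem_image.1 hg2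
      have hx : msk {i} x i = some (x i) := by simp [msk]
      have hy : msk {i} y i = some (y i) := by simp [msk]
      have heq' : (msk {i} x i).getD ⟨0, hq⟩ = (msk {i} y i).getD ⟨0, hq⟩ := heq
      rw [hx, hy] at heq'
      rw [msk_eq_iff]
      intro j hj
      rw [Finset.mem_singleton] at hj
      subst hj
      simpa using heq'
  simpa using this

end C5

/-- The pentagon bound: if every coordinate of members of `S` is determined by its two
cyclic neighbours, then `|S| ≤ q^{5/2}`. -/
lemma c5_bound {q : ℕ} (hq : 2 ≤ q) (S : Finset (Fin 5 → Fin q))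
    (hdet : ∀ i : Fin 5, ∀ x ∈ S, ∀ y ∈ S, x (i+1) = y (i+1) → x (i+4) = y (i+4) → x i = y i) :
    (S.card : ℝ) ≤ (q : ℝ) ^ ((5:ℝ)/2) := by
  have hqpos : (0:ℝ) < q := by positivity
  rcases S.eq_empty_or_nonempty with rfl | hS
  · simp only [Finset.card_empty, Nat.cast_zero]
    positivity
  have hN : (0:ℝ) < (S.card : ℝ) := by exact_mod_cast Finset.card_pos.2 hS
  have hfun : ∀ (i : Fin 5) (A : Finset (Fin 5)), (i+1) ∈ A → (i+4) ∈ A →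
      W S (msk (insert i A)) = W S (msk A) := by
    intro i A h1 h4
    apply W_congr
    intro x hx y hy
    rw [msk_eq_iff, msk_eq_iff]
    constructor
    · intro h j hj
      exact h j (Finset.mem_insert_of_mem hj)
    · intro h j hj
      rcases Finset.mem_insert.1 hj with rfl | hj'
      · exact hdet j x hx y hy (h _ h1) (h _ h4)
      · exact h j hj'
  have f0 : W S (msk {0,1,4}) = W S (msk {1,4}) := by
    have := hfun 0 {1,4} (by decide) (by decide)
    rwa [show (insert (0:Fin 5) {1,4} : Finset (Fin 5)) = {0,1,4} by decide] at this
  have f1 : W S (msk {0,1,2}) = W S (msk {0,2}) := by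
    have := hfun 1 {0,2} (by decide) (by decide)
    rwa [show (insert (1:Fin 5) {0,2} : Finset (Fin 5)) = {0,1,2} by decide] at this
  have f2 : W S (msk {1,2,3}) = W S (msk {1,3}) := by
    have := hfun 2 {1,3} (by decide) (by decide)
    rwa [show (insert (2:Fin 5) {1,3} : Finset (Fin 5)) = {1,2,3} by decide] at this
  have f3 : W S (msk {2,3,4}) = W S (msk {2,4}) := by
    have := hfun 3 {2,4} (by decide) (by decide)
    rwa [show (insert (3:Fin 5) {2,4} : Finset (Fin 5)) = {2,3,4} by decide] at this
  have f4 : W S (msk {0,3,4}) = W S (msk {0,3}) := by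
    have := hfun 4 {0,3} (by decide) (by decide)
    rwa [show (insert (4:Fin 5) {0,3} : Finset (Fin 5)) = {0,3,4} by decide] at this
  have hful : W S (msk {0,1,2,3,4}) = 0 := by
    rw [show ({0,1,2,3,4} : Finset (Fin 5)) = Finset.univ by decide]
    exact msk_full S
  have hemp := msk_empty S
  have hq0 : 0 < q := by omega
  have h0 := msk_single_le S hq0 hS 0
  have h1 := msk_single_le S hq0 hS 1
  have h2 := msk_single_le S hq0 hS 2
  have h3 := msk_single_le S hq0 hS 3
  have h4 := msk_single_le S hq0 hS 4
  have s1 := msk_submod S {0,4} {2,4}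
  rw [show ({0,4} ∪ {2,4} : Finset (Fin 5)) = {0,2,4} by decide,
      show ({0,4} ∩ {2,4} : Finset (Fin 5)) = {4} by decide] at s1
  have s2 := msk_submod S {0,1,3,4} {1,2,3,4}
  rw [show ({0,1,3,4} ∪ {1,2,3,4} : Finset (Fin 5)) = {0,1,2,3,4} by decide,
      show ({0,1,3,4} ∩ {1,2,3,4} : Finset (Fin 5)) = {1,3,4} by decide] at s2
  have s3 := msk_submod S {0} {3}
  rw [show ({0} ∪ {3} : Finset (Fin 5)) = {0,3} by decide,
      show ({0} ∩ {3} : Finset (Fin 5)) = ∅ by decide] at s3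
  have s4 := msk_submod S {0,1,2,4} {1,2,3,4}
  rw [show ({0,1,2,4} ∪ {1,2,3,4} : Finset (Fin 5)) = {0,1,2,3,4} by decide,
      show ({0,1,2,4} ∩ {1,2,3,4} : Finset (Fin 5)) = {1,2,4} by decide] at s4
  have s5 := msk_submod S {0,1,4} {0,3,4}
  rw [show ({0,1,4} ∪ {0,3,4} : Finset (Fin 5)) = {0,1,3,4} by decide,
      show ({0,1,4} ∩ {0,3,4} : Finset (Fin 5)) = {0,4} by decide] at s5
  have s6 := msk_submod S {1,2,4} {2,3,4}
  rw [show ({1,2,4} ∪ {2,3,4} : Finset (Fin 5)) = {1,2,3,4} by decide,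
      show ({1,2,4} ∩ {2,3,4} : Finset (Fin 5)) = {2,4} by decide] at s6
  have s7 := msk_submod S {1} {4}
  rw [show ({1} ∪ {4} : Finset (Fin 5)) = {1,4} by decide,
      show ({1} ∩ {4} : Finset (Fin 5)) = ∅ by decide] at s7
  have s8 := msk_submod S {0,1,2} {0,2,4}
  rw [show ({0,1,2} ∪ {0,2,4} : Finset (Fin 5)) = {0,1,2,4} by decide,
      show ({0,1,2} ∩ {0,2,4} : Finset (Fin 5)) = {0,2} by decide] at s8
  have s9 := msk_submod S {2} {4}
  rw [show ({2} ∪ {4} : Finset (Fin 5)) = {2,4} by decide,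
      show ({2} ∩ {4} : Finset (Fin 5)) = ∅ by decide] at s9
  have s10 := msk_submod S {1,2,3} {1,3,4}
  rw [show ({1,2,3} ∪ {1,3,4} : Finset (Fin 5)) = {1,2,3,4} by decide,
      show ({1,2,3} ∩ {1,3,4} : Finset (Fin 5)) = {1,3} by decide] at s10
  -- combine via the LP dual certificate
  have main : 2 * ((S.card : ℝ) * Real.log S.card) ≤ 5 * ((S.card : ℝ) * Real.log q) := by
    linarith
  have hlogs : Real.log (S.card : ℝ) ≤ (5/2 : ℝ) * Real.log q := by
    have := (mul_le_mul_iff_right₀ hN).1 (by linarith : (S.card:ℝ) * (2 * Real.log S.card)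
      ≤ (S.card:ℝ) * (5 * Real.log q))
    linarith
  have hrpow : ((q:ℝ)) ^ ((5:ℝ)/2) = Real.exp ((5/2 : ℝ) * Real.log q) := by
    rw [Real.rpow_def_of_pos hqpos]
    ring_nf
  calc (S.card : ℝ) = Real.exp (Real.log (S.card : ℝ)) := (Real.exp_log hN).symm
    _ ≤ Real.exp ((5/2 : ℝ) * Real.log q) := Real.exp_le_exp.2 hlogs
    _ = (q:ℝ) ^ ((5:ℝ)/2) := hrpow.symm

end GEnt

section Plumbing

open Real

variable {V : Type*} [Fintype V] [DecidableEq V] {q : ℕ} {G : SimpleGraph V}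

/-- If the interaction graph of `f` is contained in `G`, then each coordinate function
only depends on the in-neighbourhood. -/
lemma eval_local {f : (V → Fin q) → (V → Fin q)} (hf : IGLe G f) (v : V)
    {a b : V → Fin q} (h : ∀ u, G.Adj u v → a u = b u) : f a v = f b v := by
  classical
  suffices H : ∀ s : Finset V, ∀ a b : V → Fin q, (∀ u, u ∉ s → a u = b u) →
      (∀ u, G.Adj u v → a u = b u) → f a v = f b v by
    exact H Finset.univ a b (fun u hu => absurd (Finset.mem_univ u) hu) h
  intro s
  induction s using Finset.induction_on with
  | empty =>
    intro a b h0 _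
    have : a = b := funext fun u => h0 u (by simp)
    rw [this]
  | @insert w s hw ih =>
    intro a b h0 hadj
    have step1 : f a v = f (Function.update a w (b w)) v := by
      by_cases hA : G.Adj w v
      · have hab : a w = b w := hadj w hA
        have heq : Function.update a w (b w) = a := by
          funext u
          by_cases hu : u = w
          · subst hu; rw [Function.update_self]; exact hab.symm
          · rw [Function.update_of_ne hu]
        rw [heq]
      · have hnd : ¬ EssDependsOn (fun x => f x v) w := fun hd => hA (hf w v hd)
        by_contra hne
        exact hnd ⟨a, Function.update a w (b w),
          fun u hu => (Function.update_of_ne hu _ _).symm, hne⟩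
    have step2 : f (Function.update a w (b w)) v = f b v := by
      apply ih
      · intro u hu
        by_cases huw : u = w
        · subst huw; exact Function.update_self _ _ _
        · rw [Function.update_of_ne huw]
          exact h0 u (by simp [huw, hu])
      · intro u hadju
        by_cases huw : u = w
        · subst huw; exact Function.update_self _ _ _
        · rw [Function.update_of_ne huw]; exact hadj u hadju
    rw [step1, step2]

/-- If each coordinate function only reads coordinates in `R v`, all of which are
neighbours of `v`, then the interaction graph is contained in `G`. -/
lemma IGLe_of_reads (f : (V → Fin q) → (V → Fin q)) (R : V → Finset V)
    (hread : ∀ v (a b : V → Fin q), (∀ u ∈ R v, a u = b u) → f a v = f b v)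
    (hadj : ∀ v, ∀ u ∈ R v, G.Adj u v) : IGLe G f := by
  intro u v hdep
  by_cases hu : u ∈ R v
  · exact hadj v u hu
  · exfalso
    obtain ⟨a, b, hab, hne⟩ := hdep
    exact hne (hread v a b (fun w hw => hab w (fun hwu => hu (hwu ▸ hw))))

/-- The fixed points of `f` as a finset. -/
noncomputable def fixSet (f : (V → Fin q) → (V → Fin q)) : Finset (V → Fin q) :=
  Finset.univ.filter (fun p => f p = p)

lemma ncard_fix (f : (V → Fin q) → (V → Fin q)) :
    Set.ncard {p : V → Fin q | f p = p} = (fixSet f).card := by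
  rw [show {p : V → Fin q | f p = p} = ↑(fixSet f) by ext p; simp [fixSet]]
  exact Set.ncard_coe_finset _

lemma logb_card_le {q : ℕ} (hq : 2 ≤ q) (n : ℕ) {c : ℝ} (hc : 0 ≤ c)
    (h : (n : ℝ) ≤ (q : ℝ) ^ c) : Real.logb q n ≤ c := by
  have hq1 : (1:ℝ) < (q:ℝ) := by exact_mod_cast hq
  rcases Nat.eq_zero_or_pos n with rfl | hn
  · simpa [Real.logb] using hc
  · have hn' : (0:ℝ) < (n:ℝ) := by exact_mod_cast hn
    calc Real.logb q n ≤ Real.logb q ((q:ℝ) ^ c) :=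
          Real.logb_le_logb_of_le hq1 hn' h
      _ = c := Real.logb_rpow (by linarith) (by linarith)

lemma guessing_le {c : ℝ} (hc : 0 ≤ c)
    (h : ∀ f : (V → Fin q) → (V → Fin q), IGLe G f →
      Real.logb q (Set.ncard {p : V → Fin q | f p = p}) ≤ c) : guessing G q ≤ c := by
  apply Real.sSup_le _ hc
  rintro x ⟨f, hf, rfl⟩
  exact h f hf

lemma le_guessing (hq : 2 ≤ q) (f : (V → Fin q) → (V → Fin q)) (hf : IGLe G f) :
    Real.logb q (Set.ncard {p : V → Fin q | f p = p}) ≤ guessing G q := by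
  apply le_csSup
  · refine ⟨(Fintype.card V : ℝ), ?_⟩
    rintro x ⟨g, _, rfl⟩
    apply logb_card_le hq _ (by positivity)
    rw [ncard_fix, Real.rpow_natCast]
    calc ((fixSet g).card : ℝ) ≤ (Fintype.card (V → Fin q) : ℝ) := by
          exact_mod_cast Finset.card_le_univ _
      _ = (q:ℝ) ^ (Fintype.card V) := by
          rw [Fintype.card_fun, Fintype.card_fin]; push_cast; ring
  · exact ⟨f, hf, rfl⟩

lemma graphEntropy_eq {c : ℝ} (hc : 0 ≤ c) (q₀ : ℕ) (hq₀ : 2 ≤ q₀)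
    (hub : ∀ q : ℕ, 2 ≤ q → guessing G q ≤ c) (hlb : c ≤ guessing G q₀) :
    graphEntropy G = c := by
  apply le_antisymm
  · apply Real.sSup_le _ hc
    rintro x ⟨q, hq, rfl⟩
    exact hub q hq
  · calc c ≤ guessing G q₀ := hlb
      _ ≤ graphEntropy G := le_csSup ⟨c, by rintro x ⟨q, hq, rfl⟩; exact hub q hq⟩
          ⟨q₀, hq₀, rfl⟩

/-- Lower bound on the number of fixed points from an injective family. -/
lemma card_fix_ge {ι : Type*} [Fintype ι] (f : (V → Fin q) → (V → Fin q))
    (Φ : ι → (V → Fin q)) (hinj : Function.Injective Φ) (hfix : ∀ t, f (Φ t) = Φ t) :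
    Fintype.card ι ≤ (fixSet f).card := by
  rw [← Finset.card_univ]
  apply Finset.card_le_card_of_injOn Φ
  · intro t _
    simp [fixSet, hfix t]
  · intro t _ s _ h
    exact hinj h

end Plumbing

section Pentagon

open Real

variable {q : ℕ} {G : SimpleGraph (Fin 6)}

/-- Restriction of a configuration to the five cycle vertices. -/
def res {q : ℕ} (p : Fin 6 → Fin q) : Fin 5 → Fin q := fun i => p i.castSucc

variable (hcycle : ∀ i j : Fin 6, i.val < 5 → j.val < 5 →
      (G.Adj i j ↔ (i.val + 1) % 5 = j.val ∨ (j.val + 1) % 5 = i.val))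
    (hinc : ∀ i j : Fin 6, G.Adj i j → (i.val < 5 ∧ j.val < 5) ∨ i = 5 ∨ j = 5)

include hcycle hinc in
lemma slice_le (hq : 2 ≤ q) (f : (Fin 6 → Fin q) → (Fin 6 → Fin q)) (hf : IGLe G f)
    (c : Fin q) :
    ((((fixSet f).filter (fun p => p 5 = c)).card : ℝ)) ≤ (q:ℝ) ^ ((5:ℝ)/2) := by
  classical
  set T := (fixSet f).filter (fun p => p 5 = c) with hT
  have hmem : ∀ p ∈ T, f p = p ∧ p 5 = c := by
    intro p hp
    rw [hT, Finset.mem_filter] at hp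
    exact ⟨(Finset.mem_filter.1 hp.1).2, hp.2⟩
  have claim : ∀ p ∈ T, ∀ p' ∈ T, ∀ i : Fin 5,
      p (i+1).castSucc = p' (i+1).castSucc → p (i+4).castSucc = p' (i+4).castSucc →
      p i.castSucc = p' i.castSucc := by
    intro p hp p' hp' i h1 h4
    obtain ⟨hpf, hpc⟩ := hmem p hp
    obtain ⟨hpf', hpc'⟩ := hmem p' hp'
    have heval : f p i.castSucc = f p' i.castSucc := by
      apply eval_local hf
      intro u hu
      have hv5 : (i.castSucc : Fin 6).val < 5 := by
        simp only [Fin.coe_castSucc]; exact i.isLt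
      rcases hinc u i.castSucc hu with ⟨hu5, _⟩ | rfl | h5'
      · rcases (hcycle u i.castSucc hu5 hv5).1 hu with hA | hB
        · have hu_eq : u = (i+4).castSucc := by
            apply Fin.ext
            simp only [Fin.coe_castSucc, Fin.add_def] at *
            omega
          rw [hu_eq]; exact h4
        · have hu_eq : u = (i+1).castSucc := by
            apply Fin.ext
            simp only [Fin.coe_castSucc, Fin.add_def] at *
            omega
          rw [hu_eq]; exact h1
      · rw [hpc, hpc']
      · exfalso
        rw [h5'] at hv5
        exact (by decide : ¬ ((5 : Fin 6).val < 5)) hv5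
    calc p i.castSucc = f p i.castSucc := by rw [hpf]
      _ = f p' i.castSucc := heval
      _ = p' i.castSucc := by rw [hpf']
  have hinj : Set.InjOn (res (q := q)) ↑T := by
    intro p hp p' hp' h
    funext v
    by_cases hv : v.val < 5
    · have : v = (⟨v.val, hv⟩ : Fin 5).castSucc := by apply Fin.ext; simp
      rw [this]
      exact congrFun h ⟨v.val, hv⟩
    · have hv5 : v = 5 := by apply Fin.ext; omega
      rw [hv5, (hmem p (by exact_mod_cast hp)).2, (hmem p' (by exact_mod_cast hp')).2]
  have hcard : T.card = (T.image res).card := (Finset.card_image_of_injOn hinj).symm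
  rw [hcard]
  apply GEnt.c5_bound hq
  intro i x hx y hy h1 h4
  obtain ⟨p, hp, rfl⟩ := Finset.mem_image.1 hx
  obtain ⟨p', hp', rfl⟩ := Finset.mem_image.1 hy
  exact claim p hp p' hp' i h1 h4

include hcycle hinc in
lemma fix_le_72 (hq : 2 ≤ q) (f : (Fin 6 → Fin q) → (Fin 6 → Fin q)) (hf : IGLe G f) :
    Real.logb q (Set.ncard {p : Fin 6 → Fin q | f p = p}) ≤ 7/2 := by
  classical
  rw [ncard_fix]
  apply logb_card_le hq _ (by norm_num)
  have hdecomp : (fixSet f).card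
      = ∑ c : Fin q, ((fixSet f).filter (fun p => p 5 = c)).card :=
    Finset.card_eq_sum_card_fiberwise (fun p _ => Finset.mem_univ (p 5))
  have hqpos : (0:ℝ) < q := by positivity
  calc ((fixSet f).card : ℝ)
      = ∑ c : Fin q, (((fixSet f).filter (fun p => p 5 = c)).card : ℝ) := by
        rw [hdecomp]; push_cast; rfl
    _ ≤ ∑ _c : Fin q, (q:ℝ) ^ ((5:ℝ)/2) :=
        Finset.sum_le_sum (fun c _ => slice_le hcycle hinc hq f hf c)
    _ = (q:ℝ) * (q:ℝ) ^ ((5:ℝ)/2) := by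
        rw [Finset.sum_const, Finset.card_univ, Fintype.card_fin, nsmul_eq_mul]
    _ = (q:ℝ) ^ ((7:ℝ)/2) := by
        rw [show (7:ℝ)/2 = 1 + 5/2 by norm_num, Real.rpow_add hqpos, Real.rpow_one]

include hcycle hinc in
lemma fix_le_52 (hiso : ∀ j, ¬ G.Adj 5 j) (hq : 2 ≤ q)
    (f : (Fin 6 → Fin q) → (Fin 6 → Fin q)) (hf : IGLe G f) :
    Real.logb q (Set.ncard {p : Fin 6 → Fin q | f p = p}) ≤ 5/2 := by
  classical
  rw [ncard_fix]
  apply logb_card_le hq _ (by norm_num)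
  set c₀ : Fin q := f (fun _ => ⟨0, by omega⟩) 5 with hc₀
  have hfix5 : ∀ p ∈ fixSet f, p 5 = c₀ := by
    intro p hp
    have hpf : f p = p := by simpa [fixSet] using hp
    have : f p 5 = c₀ := by
      rw [hc₀]
      apply eval_local hf
      intro u hu
      exact absurd (G.adj_symm hu) (hiso u)
    rw [← this, hpf]
  have : fixSet f = (fixSet f).filter (fun p => p 5 = c₀) := by
    ext p
    simp only [Finset.mem_filter]
    exact ⟨fun hp => ⟨hp, hfix5 p hp⟩, fun hp => hp.1⟩
  rw [this]
  exact slice_le hcycle hinc hq f hf c₀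

include hcycle hinc in
lemma fix_le_3 (a b : Fin 6) (ha5 : a.val < 5) (hb5 : b.val < 5) (hne : a ≠ b)
    (hab : ¬ G.Adj a b) (h5a : ¬ G.Adj 5 a) (h5b : ¬ G.Adj 5 b) (hq : 2 ≤ q)
    (f : (Fin 6 → Fin q) → (Fin 6 → Fin q)) (hf : IGLe G f) :
    Real.logb q (Set.ncard {p : Fin 6 → Fin q | f p = p}) ≤ 3 := by
  classical
  rw [ncard_fix]
  apply logb_card_le hq _ (by norm_num)
  set D := ({a, b, 5} : Finset (Fin 6))ᶜ with hD
  have hmemD : ∀ u : Fin 6, u ≠ a → u ≠ b → u ≠ 5 → u ∈ D := by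
    intro u h1 h2 h3
    simp [hD, h1, h2, h3]
  have ha5' : a ≠ 5 := by intro h; rw [h] at ha5; exact (by decide : ¬ ((5 : Fin 6).val < 5)) ha5
  have hb5' : b ≠ 5 := by intro h; rw [h] at hb5; exact (by decide : ¬ ((5 : Fin 6).val < 5)) hb5
  -- injectivity of restriction to D on the fixed-point set
  have hinj : ∀ p ∈ fixSet f, ∀ p' ∈ fixSet f,
      (∀ u : Fin 6, u ∈ D → p u = p' u) → p = p' := by
    intro p hp p' hp' h
    have hpf : f p = p := by simpa [fixSet] using hp
    have hpf' : f p' = p' := by simpa [fixSet] using hp'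
    have key : ∀ v : Fin 6, (∀ u, G.Adj u v → u ∈ D) → p v = p' v := by
      intro v hv
      calc p v = f p v := by rw [hpf]
        _ = f p' v := eval_local hf v (fun u hu => h u (hv u hu))
        _ = p' v := by rw [hpf']
    funext v
    by_cases hvD : v ∈ D
    · exact h v hvD
    · have hv3 : v = a ∨ v = b ∨ v = 5 := by
        by_contra hcon
        push_neg at hcon
        exact hvD (hmemD v hcon.1 hcon.2.1 hcon.2.2)
      rcases hv3 with rfl | rfl | rfl
      · apply key
        intro u hu
        apply hmemD
        · exact hu.ne
        · intro h'; rw [h'] at hu; exact hab (G.adj_symm hu)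
        · intro h'; rw [h'] at hu; exact h5a hu
      · apply key
        intro u hu
        apply hmemD
        · intro h'; rw [h'] at hu; exact hab hu
        · exact hu.ne
        · intro h'; rw [h'] at hu; exact h5b hu
      · apply key
        intro u hu
        apply hmemD
        · intro h'; rw [h'] at hu; exact h5a (G.adj_symm hu)
        · intro h'; rw [h'] at hu; exact h5b (G.adj_symm hu)
        · exact hu.ne
  -- counting
  have hcard3 : ({a, b, 5} : Finset (Fin 6)).card = 3 := by
    rw [Finset.card_insert_of_notMem (by simp [hne, ha5']),
        Finset.card_insert_of_notMem (by simp [hb5']), Finset.card_singleton]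
  have hDcard : D.card = 3 := by
    rw [hD, Finset.card_compl, hcard3]
    simp
  have hcount : (fixSet f).card ≤ q ^ 3 := by
    have := Finset.card_le_card_of_injOn
      (f := fun (p : Fin 6 → Fin q) => (fun u : {x // x ∈ D} => p u.1))
      (s := fixSet f) (t := Finset.univ)
      (fun p _ => Finset.mem_univ _)
      (by
        intro p hp p' hp' hpp
        apply hinj p (by exact_mod_cast hp) p' (by exact_mod_cast hp')
        intro u hu
        exact congrFun hpp ⟨u, hu⟩)
    calc (fixSet f).card ≤ (Finset.univ : Finset ({x // x ∈ D} → Fin q)).card := this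
      _ = q ^ 3 := by
        rw [Finset.card_univ, Fintype.card_fun, Fintype.card_coe, hDcard, Fintype.card_fin]
  calc ((fixSet f).card : ℝ) ≤ ((q ^ 3 : ℕ) : ℝ) := by exact_mod_cast hcount
    _ = (q:ℝ) ^ ((3:ℕ):ℝ) := by rw [Real.rpow_natCast]; push_cast; ring
    _ = (q:ℝ) ^ (3:ℝ) := by norm_num

end Pentagon

section Constructions
open Real
set_option maxRecDepth 40000
set_option maxHeartbeats 2000000

def e2 (a b : Fin 2) : Fin 4 := ⟨2 * a.val + b.val, by omega⟩
def dL (x : Fin 4) : Fin 2 := ⟨x.val / 2, by omega⟩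
def dR (x : Fin 4) : Fin 2 := ⟨x.val % 2, by omega⟩
lemma dL_e2 (a b : Fin 2) : dL (e2 a b) = a := by revert a b; decide
lemma dR_e2 (a b : Fin 2) : dR (e2 a b) = b := by revert a b; decide

lemma logb_pow_pow (k m : ℕ) (hk : 0 < k) : Real.logb ((2:ℝ)^k) ((2:ℝ)^m) = (m:ℝ)/(k:ℝ) := by
  have h2 : Real.log 2 ≠ 0 := (Real.log_pos one_lt_two).ne'
  have hk' : (k:ℝ) ≠ 0 := by positivity
  rw [Real.logb, Real.log_pow, Real.log_pow]
  field_simp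

def fA : (Fin 6 → Fin 4) → Fin 6 → Fin 4 := fun x => ![e2 (dR (x 4)) (dL (x 1)), e2 (dR (x 0)) (dL (x 2)), e2 (dR (x 1)) (dL (x 3)), e2 (dR (x 2)) (dL (x 4)), e2 (dR (x 3)) (dL (x 0)), ⟨0, by omega⟩]
def PA : (Fin 5 → Fin 2) → Fin 6 → Fin 4 := fun t => ![e2 (t 0) (t 1), e2 (t 1) (t 2), e2 (t 2) (t 3), e2 (t 3) (t 4), e2 (t 4) (t 0), ⟨0, by omega⟩]
def RA : Fin 6 → Finset (Fin 6) := ![{4, 1}, {0, 2}, {1, 3}, {2, 4}, {3, 0}, (∅ : Finset (Fin 6))]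

lemma ge52 {G : SimpleGraph (Fin 6)}
    (hcycle : ∀ i j : Fin 6, i.val < 5 → j.val < 5 →
      (G.Adj i j ↔ (i.val + 1) % 5 = j.val ∨ (j.val + 1) % 5 = i.val)) :
    (5:ℝ)/2 ≤ guessing G 4 := by
  have hread : ∀ v (a b : Fin 6 → Fin 4), (∀ u ∈ RA v, a u = b u) → fA a v = fA b v := by
    intro v a b h
    fin_cases v
    · have h4 : a 4 = b 4 := h 4 (by decide); have h1 : a 1 = b 1 := h 1 (by decide)
      show e2 (dR (a 4)) (dL (a 1)) = e2 (dR (b 4)) (dL (b 1))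
      rw [h4, h1]
    · have h0 : a 0 = b 0 := h 0 (by decide); have h2 : a 2 = b 2 := h 2 (by decide)
      show e2 (dR (a 0)) (dL (a 2)) = e2 (dR (b 0)) (dL (b 2))
      rw [h0, h2]
    · have h1 : a 1 = b 1 := h 1 (by decide); have h3 : a 3 = b 3 := h 3 (by decide)
      show e2 (dR (a 1)) (dL (a 3)) = e2 (dR (b 1)) (dL (b 3))
      rw [h1, h3]
    · have h2 : a 2 = b 2 := h 2 (by decide); have h4 : a 4 = b 4 := h 4 (by decide)
      show e2 (dR (a 2)) (dL (a 4)) = e2 (dR (b 2)) (dL (b 4))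
      rw [h2, h4]
    · have h3 : a 3 = b 3 := h 3 (by decide); have h0 : a 0 = b 0 := h 0 (by decide)
      show e2 (dR (a 3)) (dL (a 0)) = e2 (dR (b 3)) (dL (b 0))
      rw [h3, h0]
    · rfl
  have hadj : ∀ v : Fin 6, ∀ u ∈ RA v, G.Adj u v := by
    intro v u hu
    fin_cases v
    · have hu' : u ∈ ({4, 1} : Finset (Fin 6)) := hu
      rw [Finset.mem_insert, Finset.mem_singleton] at hu'
      rcases hu' with rfl | rfl
      · exact (hcycle 4 0 (by decide) (by decide)).2 (by decide)
      · exact (hcycle 1 0 (by decide) (by decide)).2 (by decide)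
    · have hu' : u ∈ ({0, 2} : Finset (Fin 6)) := hu
      rw [Finset.mem_insert, Finset.mem_singleton] at hu'
      rcases hu' with rfl | rfl
      · exact (hcycle 0 1 (by decide) (by decide)).2 (by decide)
      · exact (hcycle 2 1 (by decide) (by decide)).2 (by decide)
    · have hu' : u ∈ ({1, 3} : Finset (Fin 6)) := hu
      rw [Finset.mem_insert, Finset.mem_singleton] at hu'
      rcases hu' with rfl | rfl
      · exact (hcycle 1 2 (by decide) (by decide)).2 (by decide)
      · exact (hcycle 3 2 (by decide) (by decide)).2 (by decide)
    · have hu' : u ∈ ({2, 4} : Finset (Fin 6)) := hu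
      rw [Finset.mem_insert, Finset.mem_singleton] at hu'
      rcases hu' with rfl | rfl
      · exact (hcycle 2 3 (by decide) (by decide)).2 (by decide)
      · exact (hcycle 4 3 (by decide) (by decide)).2 (by decide)
    · have hu' : u ∈ ({3, 0} : Finset (Fin 6)) := hu
      rw [Finset.mem_insert, Finset.mem_singleton] at hu'
      rcases hu' with rfl | rfl
      · exact (hcycle 3 4 (by decide) (by decide)).2 (by decide)
      · exact (hcycle 0 4 (by decide) (by decide)).2 (by decide)
    · have hu' : u ∈ (∅ : Finset (Fin 6)) := hu
      exact absurd hu' (Finset.notMem_empty u)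
  have hIG : IGLe G fA := IGLe_of_reads fA RA hread hadj
  have hfix : ∀ t, fA (PA t) = PA t := by decide
  have hinj : Function.Injective PA := by
    intro t s h
    funext i
    fin_cases i
    · have h0 : e2 (t 0) (t 1) = e2 (s 0) (s 1) := congrFun h 0
      simpa [dL_e2] using congrArg dL h0
    · have h0 : e2 (t 1) (t 2) = e2 (s 1) (s 2) := congrFun h 1
      simpa [dL_e2] using congrArg dL h0
    · have h0 : e2 (t 2) (t 3) = e2 (s 2) (s 3) := congrFun h 2
      simpa [dL_e2] using congrArg dL h0
    · have h0 : e2 (t 3) (t 4) = e2 (s 3) (s 4) := congrFun h 3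
      simpa [dL_e2] using congrArg dL h0
    · have h0 : e2 (t 4) (t 0) = e2 (s 4) (s 0) := congrFun h 4
      simpa [dL_e2] using congrArg dL h0
  have hcard := card_fix_ge fA PA hinj hfix
  rw [show Fintype.card (Fin 5 → Fin 2) = 32 by simp [Fintype.card_fun]] at hcard
  have := le_guessing (G := G) (by norm_num) fA hIG
  refine le_trans ?_ this
  rw [ncard_fix]
  calc (5:ℝ)/2 = Real.logb 4 32 := by
        rw [show (4:ℝ) = (2:ℝ)^2 by norm_num, show (32:ℝ) = (2:ℝ)^5 by norm_num,
          logb_pow_pow 2 5 (by norm_num)]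
        norm_num
    _ ≤ Real.logb 4 ((fixSet fA).card) := by
        apply Real.logb_le_logb_of_le (by norm_num) (by norm_num)
        exact_mod_cast hcard
  
def fB0 : (Fin 6 → Fin 4) → Fin 6 → Fin 4 := fun x => ![e2 (dL (x 1) + dR (x 1) + dL (x 5)) (dL (x 4)), e2 (dR (x 2) + dR (x 5)) (dL (x 0) + dR (x 2) + dL (x 5) + dR (x 5)), e2 (dL (x 1) + dL (x 3) + dR (x 5)) (dL (x 1) + dR (x 5)), e2 (dL (x 2) + dR (x 2)) (dR (x 4)), e2 (dR (x 0)) (dR (x 3)), e2 (dL (x 0) + dL (x 1) + dR (x 1)) (dL (x 1) + dR (x 2))]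
def PB0 : (Fin 7 → Fin 2) → Fin 6 → Fin 4 := fun t => ![e2 (t 0) (t 1), e2 (t 2) (t 3), e2 (t 4) (t 5), e2 (t 4 + t 5) (t 6), e2 (t 1) (t 6), e2 (t 0 + t 2 + t 3) (t 2 + t 5)]
def RB0 : Fin 6 → Finset (Fin 6) := ![{1, 4, 5}, {0, 2, 5}, {1, 3, 5}, {2, 4}, {0, 3}, {0, 1, 2}]

lemma ge72_0 {G : SimpleGraph (Fin 6)}
    (hcycle : ∀ i j : Fin 6, i.val < 5 → j.val < 5 →
      (G.Adj i j ↔ (i.val + 1) % 5 = j.val ∨ (j.val + 1) % 5 = i.val))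
    (h0 : G.Adj 5 0) (h1 : G.Adj 5 1) (h2 : G.Adj 5 2) :
    (7:ℝ)/2 ≤ guessing G 4 := by
  have hread : ∀ v (a b : Fin 6 → Fin 4), (∀ u ∈ RB0 v, a u = b u) → fB0 a v = fB0 b v := by
    intro v a b h
    fin_cases v
    · have h1 : a 1 = b 1 := h 1 (by decide); have h4 : a 4 = b 4 := h 4 (by decide); have h5 : a 5 = b 5 := h 5 (by decide)
      show e2 (dL (a 1) + dR (a 1) + dL (a 5)) (dL (a 4)) = e2 (dL (b 1) + dR (b 1) + dL (b 5)) (dL (b 4))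
      rw [h1, h4, h5]
    · have h0 : a 0 = b 0 := h 0 (by decide); have h2 : a 2 = b 2 := h 2 (by decide); have h5 : a 5 = b 5 := h 5 (by decide)
      show e2 (dR (a 2) + dR (a 5)) (dL (a 0) + dR (a 2) + dL (a 5) + dR (a 5)) = e2 (dR (b 2) + dR (b 5)) (dL (b 0) + dR (b 2) + dL (b 5) + dR (b 5))
      rw [h0, h2, h5]
    · have h1 : a 1 = b 1 := h 1 (by decide); have h3 : a 3 = b 3 := h 3 (by decide); have h5 : a 5 = b 5 := h 5 (by decide)
      show e2 (dL (a 1) + dL (a 3) + dR (a 5)) (dL (a 1) + dR (a 5)) = e2 (dL (b 1) + dL (b 3) + dR (b 5)) (dL (b 1) + dR (b 5))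
      rw [h1, h3, h5]
    · have h2 : a 2 = b 2 := h 2 (by decide); have h4 : a 4 = b 4 := h 4 (by decide)
      show e2 (dL (a 2) + dR (a 2)) (dR (a 4)) = e2 (dL (b 2) + dR (b 2)) (dR (b 4))
      rw [h2, h4]
    · have h0 : a 0 = b 0 := h 0 (by decide); have h3 : a 3 = b 3 := h 3 (by decide)
      show e2 (dR (a 0)) (dR (a 3)) = e2 (dR (b 0)) (dR (b 3))
      rw [h0, h3]
    · have h0 : a 0 = b 0 := h 0 (by decide); have h1 : a 1 = b 1 := h 1 (by decide); have h2 : a 2 = b 2 := h 2 (by decide)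
      show e2 (dL (a 0) + dL (a 1) + dR (a 1)) (dL (a 1) + dR (a 2)) = e2 (dL (b 0) + dL (b 1) + dR (b 1)) (dL (b 1) + dR (b 2))
      rw [h0, h1, h2]
  have hadj : ∀ v : Fin 6, ∀ u ∈ RB0 v, G.Adj u v := by
    intro v u hu
    fin_cases v
    · have hu' : u ∈ ({1, 4, 5} : Finset (Fin 6)) := hu
      rw [Finset.mem_insert, Finset.mem_insert, Finset.mem_singleton] at hu'
      rcases hu' with rfl | rfl | rfl
      · exact (hcycle 1 0 (by decide) (by decide)).2 (by decide)
      · exact (hcycle 4 0 (by decide) (by decide)).2 (by decide)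
      · exact h0
    · have hu' : u ∈ ({0, 2, 5} : Finset (Fin 6)) := hu
      rw [Finset.mem_insert, Finset.mem_insert, Finset.mem_singleton] at hu'
      rcases hu' with rfl | rfl | rfl
      · exact (hcycle 0 1 (by decide) (by decide)).2 (by decide)
      · exact (hcycle 2 1 (by decide) (by decide)).2 (by decide)
      · exact h1
    · have hu' : u ∈ ({1, 3, 5} : Finset (Fin 6)) := hu
      rw [Finset.mem_insert, Finset.mem_insert, Finset.mem_singleton] at hu'
      rcases hu' with rfl | rfl | rfl
      · exact (hcycle 1 2 (by decide) (by decide)).2 (by decide)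
      · exact (hcycle 3 2 (by decide) (by decide)).2 (by decide)
      · exact h2
    · have hu' : u ∈ ({2, 4} : Finset (Fin 6)) := hu
      rw [Finset.mem_insert, Finset.mem_singleton] at hu'
      rcases hu' with rfl | rfl
      · exact (hcycle 2 3 (by decide) (by decide)).2 (by decide)
      · exact (hcycle 4 3 (by decide) (by decide)).2 (by decide)
    · have hu' : u ∈ ({0, 3} : Finset (Fin 6)) := hu
      rw [Finset.mem_insert, Finset.mem_singleton] at hu'
      rcases hu' with rfl | rfl
      · exact (hcycle 0 4 (by decide) (by decide)).2 (by decide)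
      · exact (hcycle 3 4 (by decide) (by decide)).2 (by decide)
    · have hu' : u ∈ ({0, 1, 2} : Finset (Fin 6)) := hu
      rw [Finset.mem_insert, Finset.mem_insert, Finset.mem_singleton] at hu'
      rcases hu' with rfl | rfl | rfl
      · exact G.adj_symm h0
      · exact G.adj_symm h1
      · exact G.adj_symm h2
  have hIG : IGLe G fB0 := IGLe_of_reads fB0 RB0 hread hadj
  have hfix : ∀ t, fB0 (PB0 t) = PB0 t := by decide
  have hinj : Function.Injective PB0 := by
    intro t s h
    funext i
    fin_cases i
    · have h0 : e2 (t 0) (t 1) = e2 (s 0) (s 1) := congrFun h 0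
      simpa [dL_e2, dR_e2] using congrArg dL h0
    · have h0 : e2 (t 0) (t 1) = e2 (s 0) (s 1) := congrFun h 0
      simpa [dL_e2, dR_e2] using congrArg dR h0
    · have h0 : e2 (t 2) (t 3) = e2 (s 2) (s 3) := congrFun h 1
      simpa [dL_e2, dR_e2] using congrArg dL h0
    · have h0 : e2 (t 2) (t 3) = e2 (s 2) (s 3) := congrFun h 1
      simpa [dL_e2, dR_e2] using congrArg dR h0
    · have h0 : e2 (t 4) (t 5) = e2 (s 4) (s 5) := congrFun h 2
      simpa [dL_e2, dR_e2] using congrArg dL h0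
    · have h0 : e2 (t 4) (t 5) = e2 (s 4) (s 5) := congrFun h 2
      simpa [dL_e2, dR_e2] using congrArg dR h0
    · have h0 : e2 (t 4 + t 5) (t 6) = e2 (s 4 + s 5) (s 6) := congrFun h 3
      simpa [dL_e2, dR_e2] using congrArg dR h0
  have hcard := card_fix_ge fB0 PB0 hinj hfix
  rw [show Fintype.card (Fin 7 → Fin 2) = 128 by simp [Fintype.card_fun]] at hcard
  have := le_guessing (G := G) (by norm_num) fB0 hIG
  refine le_trans ?_ this
  rw [ncard_fix]
  calc (7:ℝ)/2 = Real.logb 4 128 := by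
        rw [show (4:ℝ) = (2:ℝ)^2 by norm_num, show (128:ℝ) = (2:ℝ)^7 by norm_num,
          logb_pow_pow 2 7 (by norm_num)]
        norm_num
    _ ≤ Real.logb 4 ((fixSet fB0).card) := by
        apply Real.logb_le_logb_of_le (by norm_num) (by norm_num)
        exact_mod_cast hcard

def fB1 : (Fin 6 → Fin 4) → Fin 6 → Fin 4 := fun x => ![e2 (dR (x 1)) (dR (x 4)), e2 (dL (x 2) + dR (x 2) + dL (x 5)) (dL (x 0)), e2 (dR (x 3) + dR (x 5)) (dL (x 1) + dR (x 3) + dL (x 5) + dR (x 5)), e2 (dL (x 2) + dL (x 4) + dR (x 5)) (dL (x 2) + dR (x 5)), e2 (dL (x 3) + dR (x 3)) (dR (x 0)), e2 (dL (x 1) + dL (x 2) + dR (x 2)) (dL (x 2) + dR (x 3))]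
def PB1 : (Fin 7 → Fin 2) → Fin 6 → Fin 4 := fun t => ![e2 (t 1) (t 6), e2 (t 0) (t 1), e2 (t 2) (t 3), e2 (t 4) (t 5), e2 (t 4 + t 5) (t 6), e2 (t 0 + t 2 + t 3) (t 2 + t 5)]
def RB1 : Fin 6 → Finset (Fin 6) := ![{1, 4}, {2, 0, 5}, {1, 3, 5}, {2, 4, 5}, {3, 0}, {1, 2, 3}]

lemma ge72_1 {G : SimpleGraph (Fin 6)}
    (hcycle : ∀ i j : Fin 6, i.val < 5 → j.val < 5 →
      (G.Adj i j ↔ (i.val + 1) % 5 = j.val ∨ (j.val + 1) % 5 = i.val))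
    (h0 : G.Adj 5 1) (h1 : G.Adj 5 2) (h2 : G.Adj 5 3) :
    (7:ℝ)/2 ≤ guessing G 4 := by
  have hread : ∀ v (a b : Fin 6 → Fin 4), (∀ u ∈ RB1 v, a u = b u) → fB1 a v = fB1 b v := by
    intro v a b h
    fin_cases v
    · have h1 : a 1 = b 1 := h 1 (by decide); have h4 : a 4 = b 4 := h 4 (by decide)
      show e2 (dR (a 1)) (dR (a 4)) = e2 (dR (b 1)) (dR (b 4))
      rw [h1, h4]
    · have h2 : a 2 = b 2 := h 2 (by decide); have h0 : a 0 = b 0 := h 0 (by decide); have h5 : a 5 = b 5 := h 5 (by decide)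
      show e2 (dL (a 2) + dR (a 2) + dL (a 5)) (dL (a 0)) = e2 (dL (b 2) + dR (b 2) + dL (b 5)) (dL (b 0))
      rw [h2, h0, h5]
    · have h1 : a 1 = b 1 := h 1 (by decide); have h3 : a 3 = b 3 := h 3 (by decide); have h5 : a 5 = b 5 := h 5 (by decide)
      show e2 (dR (a 3) + dR (a 5)) (dL (a 1) + dR (a 3) + dL (a 5) + dR (a 5)) = e2 (dR (b 3) + dR (b 5)) (dL (b 1) + dR (b 3) + dL (b 5) + dR (b 5))
      rw [h1, h3, h5]
    · have h2 : a 2 = b 2 := h 2 (by decide); have h4 : a 4 = b 4 := h 4 (by decide); have h5 : a 5 = b 5 := h 5 (by decide)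
      show e2 (dL (a 2) + dL (a 4) + dR (a 5)) (dL (a 2) + dR (a 5)) = e2 (dL (b 2) + dL (b 4) + dR (b 5)) (dL (b 2) + dR (b 5))
      rw [h2, h4, h5]
    · have h3 : a 3 = b 3 := h 3 (by decide); have h0 : a 0 = b 0 := h 0 (by decide)
      show e2 (dL (a 3) + dR (a 3)) (dR (a 0)) = e2 (dL (b 3) + dR (b 3)) (dR (b 0))
      rw [h3, h0]
    · have h1 : a 1 = b 1 := h 1 (by decide); have h2 : a 2 = b 2 := h 2 (by decide); have h3 : a 3 = b 3 := h 3 (by decide)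
      show e2 (dL (a 1) + dL (a 2) + dR (a 2)) (dL (a 2) + dR (a 3)) = e2 (dL (b 1) + dL (b 2) + dR (b 2)) (dL (b 2) + dR (b 3))
      rw [h1, h2, h3]
  have hadj : ∀ v : Fin 6, ∀ u ∈ RB1 v, G.Adj u v := by
    intro v u hu
    fin_cases v
    · have hu' : u ∈ ({1, 4} : Finset (Fin 6)) := hu
      rw [Finset.mem_insert, Finset.mem_singleton] at hu'
      rcases hu' with rfl | rfl
      · exact (hcycle 1 0 (by decide) (by decide)).2 (by decide)
      · exact (hcycle 4 0 (by decide) (by decide)).2 (by decide)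
    · have hu' : u ∈ ({2, 0, 5} : Finset (Fin 6)) := hu
      rw [Finset.mem_insert, Finset.mem_insert, Finset.mem_singleton] at hu'
      rcases hu' with rfl | rfl | rfl
      · exact (hcycle 2 1 (by decide) (by decide)).2 (by decide)
      · exact (hcycle 0 1 (by decide) (by decide)).2 (by decide)
      · exact h0
    · have hu' : u ∈ ({1, 3, 5} : Finset (Fin 6)) := hu
      rw [Finset.mem_insert, Finset.mem_insert, Finset.mem_singleton] at hu'
      rcases hu' with rfl | rfl | rfl
      · exact (hcycle 1 2 (by decide) (by decide)).2 (by decide)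
      · exact (hcycle 3 2 (by decide) (by decide)).2 (by decide)
      · exact h1
    · have hu' : u ∈ ({2, 4, 5} : Finset (Fin 6)) := hu
      rw [Finset.mem_insert, Finset.mem_insert, Finset.mem_singleton] at hu'
      rcases hu' with rfl | rfl | rfl
      · exact (hcycle 2 3 (by decide) (by decide)).2 (by decide)
      · exact (hcycle 4 3 (by decide) (by decide)).2 (by decide)
      · exact h2
    · have hu' : u ∈ ({3, 0} : Finset (Fin 6)) := hu
      rw [Finset.mem_insert, Finset.mem_singleton] at hu'
      rcases hu' with rfl | rfl
      · exact (hcycle 3 4 (by decide) (by decide)).2 (by decide)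
      · exact (hcycle 0 4 (by decide) (by decide)).2 (by decide)
    · have hu' : u ∈ ({1, 2, 3} : Finset (Fin 6)) := hu
      rw [Finset.mem_insert, Finset.mem_insert, Finset.mem_singleton] at hu'
      rcases hu' with rfl | rfl | rfl
      · exact G.adj_symm h0
      · exact G.adj_symm h1
      · exact G.adj_symm h2
  have hIG : IGLe G fB1 := IGLe_of_reads fB1 RB1 hread hadj
  have hfix : ∀ t, fB1 (PB1 t) = PB1 t := by decide
  have hinj : Function.Injective PB1 := by
    intro t s h
    funext i
    fin_cases i
    · have h0 : e2 (t 0) (t 1) = e2 (s 0) (s 1) := congrFun h 1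
      simpa [dL_e2, dR_e2] using congrArg dL h0
    · have h0 : e2 (t 0) (t 1) = e2 (s 0) (s 1) := congrFun h 1
      simpa [dL_e2, dR_e2] using congrArg dR h0
    · have h0 : e2 (t 2) (t 3) = e2 (s 2) (s 3) := congrFun h 2
      simpa [dL_e2, dR_e2] using congrArg dL h0
    · have h0 : e2 (t 2) (t 3) = e2 (s 2) (s 3) := congrFun h 2
      simpa [dL_e2, dR_e2] using congrArg dR h0
    · have h0 : e2 (t 4) (t 5) = e2 (s 4) (s 5) := congrFun h 3
      simpa [dL_e2, dR_e2] using congrArg dL h0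
    · have h0 : e2 (t 4) (t 5) = e2 (s 4) (s 5) := congrFun h 3
      simpa [dL_e2, dR_e2] using congrArg dR h0
    · have h0 : e2 (t 4 + t 5) (t 6) = e2 (s 4 + s 5) (s 6) := congrFun h 4
      simpa [dL_e2, dR_e2] using congrArg dR h0
  have hcard := card_fix_ge fB1 PB1 hinj hfix
  rw [show Fintype.card (Fin 7 → Fin 2) = 128 by simp [Fintype.card_fun]] at hcard
  have := le_guessing (G := G) (by norm_num) fB1 hIG
  refine le_trans ?_ this
  rw [ncard_fix]
  calc (7:ℝ)/2 = Real.logb 4 128 := by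
        rw [show (4:ℝ) = (2:ℝ)^2 by norm_num, show (128:ℝ) = (2:ℝ)^7 by norm_num,
          logb_pow_pow 2 7 (by norm_num)]
        norm_num
    _ ≤ Real.logb 4 ((fixSet fB1).card) := by
        apply Real.logb_le_logb_of_le (by norm_num) (by norm_num)
        exact_mod_cast hcard

def fB2 : (Fin 6 → Fin 4) → Fin 6 → Fin 4 := fun x => ![e2 (dL (x 4) + dR (x 4)) (dR (x 1)), e2 (dR (x 2)) (dR (x 0)), e2 (dL (x 3) + dR (x 3) + dL (x 5)) (dL (x 1)), e2 (dR (x 4) + dR (x 5)) (dL (x 2) + dR (x 4) + dL (x 5) + dR (x 5)), e2 (dL (x 3) + dL (x 0) + dR (x 5)) (dL (x 3) + dR (x 5)), e2 (dL (x 2) + dL (x 3) + dR (x 3)) (dL (x 3) + dR (x 4))]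
def PB2 : (Fin 7 → Fin 2) → Fin 6 → Fin 4 := fun t => ![e2 (t 4 + t 5) (t 6), e2 (t 1) (t 6), e2 (t 0) (t 1), e2 (t 2) (t 3), e2 (t 4) (t 5), e2 (t 0 + t 2 + t 3) (t 2 + t 5)]
def RB2 : Fin 6 → Finset (Fin 6) := ![{4, 1}, {2, 0}, {3, 1, 5}, {2, 4, 5}, {3, 0, 5}, {2, 3, 4}]

lemma ge72_2 {G : SimpleGraph (Fin 6)}
    (hcycle : ∀ i j : Fin 6, i.val < 5 → j.val < 5 →
      (G.Adj i j ↔ (i.val + 1) % 5 = j.val ∨ (j.val + 1) % 5 = i.val))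
    (h0 : G.Adj 5 2) (h1 : G.Adj 5 3) (h2 : G.Adj 5 4) :
    (7:ℝ)/2 ≤ guessing G 4 := by
  have hread : ∀ v (a b : Fin 6 → Fin 4), (∀ u ∈ RB2 v, a u = b u) → fB2 a v = fB2 b v := by
    intro v a b h
    fin_cases v
    · have h4 : a 4 = b 4 := h 4 (by decide); have h1 : a 1 = b 1 := h 1 (by decide)
      show e2 (dL (a 4) + dR (a 4)) (dR (a 1)) = e2 (dL (b 4) + dR (b 4)) (dR (b 1))
      rw [h4, h1]
    · have h2 : a 2 = b 2 := h 2 (by decide); have h0 : a 0 = b 0 := h 0 (by decide)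
      show e2 (dR (a 2)) (dR (a 0)) = e2 (dR (b 2)) (dR (b 0))
      rw [h2, h0]
    · have h3 : a 3 = b 3 := h 3 (by decide); have h1 : a 1 = b 1 := h 1 (by decide); have h5 : a 5 = b 5 := h 5 (by decide)
      show e2 (dL (a 3) + dR (a 3) + dL (a 5)) (dL (a 1)) = e2 (dL (b 3) + dR (b 3) + dL (b 5)) (dL (b 1))
      rw [h3, h1, h5]
    · have h2 : a 2 = b 2 := h 2 (by decide); have h4 : a 4 = b 4 := h 4 (by decide); have h5 : a 5 = b 5 := h 5 (by decide)
      show e2 (dR (a 4) + dR (a 5)) (dL (a 2) + dR (a 4) + dL (a 5) + dR (a 5)) = e2 (dR (b 4) + dR (b 5)) (dL (b 2) + dR (b 4) + dL (b 5) + dR (b 5))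
      rw [h2, h4, h5]
    · have h3 : a 3 = b 3 := h 3 (by decide); have h0 : a 0 = b 0 := h 0 (by decide); have h5 : a 5 = b 5 := h 5 (by decide)
      show e2 (dL (a 3) + dL (a 0) + dR (a 5)) (dL (a 3) + dR (a 5)) = e2 (dL (b 3) + dL (b 0) + dR (b 5)) (dL (b 3) + dR (b 5))
      rw [h3, h0, h5]
    · have h2 : a 2 = b 2 := h 2 (by decide); have h3 : a 3 = b 3 := h 3 (by decide); have h4 : a 4 = b 4 := h 4 (by decide)
      show e2 (dL (a 2) + dL (a 3) + dR (a 3)) (dL (a 3) + dR (a 4)) = e2 (dL (b 2) + dL (b 3) + dR (b 3)) (dL (b 3) + dR (b 4))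
      rw [h2, h3, h4]
  have hadj : ∀ v : Fin 6, ∀ u ∈ RB2 v, G.Adj u v := by
    intro v u hu
    fin_cases v
    · have hu' : u ∈ ({4, 1} : Finset (Fin 6)) := hu
      rw [Finset.mem_insert, Finset.mem_singleton] at hu'
      rcases hu' with rfl | rfl
      · exact (hcycle 4 0 (by decide) (by decide)).2 (by decide)
      · exact (hcycle 1 0 (by decide) (by decide)).2 (by decide)
    · have hu' : u ∈ ({2, 0} : Finset (Fin 6)) := hu
      rw [Finset.mem_insert, Finset.mem_singleton] at hu'
      rcases hu' with rfl | rfl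
      · exact (hcycle 2 1 (by decide) (by decide)).2 (by decide)
      · exact (hcycle 0 1 (by decide) (by decide)).2 (by decide)
    · have hu' : u ∈ ({3, 1, 5} : Finset (Fin 6)) := hu
      rw [Finset.mem_insert, Finset.mem_insert, Finset.mem_singleton] at hu'
      rcases hu' with rfl | rfl | rfl
      · exact (hcycle 3 2 (by decide) (by decide)).2 (by decide)
      · exact (hcycle 1 2 (by decide) (by decide)).2 (by decide)
      · exact h0
    · have hu' : u ∈ ({2, 4, 5} : Finset (Fin 6)) := hu
      rw [Finset.mem_insert, Finset.mem_insert, Finset.mem_singleton] at hu'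
      rcases hu' with rfl | rfl | rfl
      · exact (hcycle 2 3 (by decide) (by decide)).2 (by decide)
      · exact (hcycle 4 3 (by decide) (by decide)).2 (by decide)
      · exact h1
    · have hu' : u ∈ ({3, 0, 5} : Finset (Fin 6)) := hu
      rw [Finset.mem_insert, Finset.mem_insert, Finset.mem_singleton] at hu'
      rcases hu' with rfl | rfl | rfl
      · exact (hcycle 3 4 (by decide) (by decide)).2 (by decide)
      · exact (hcycle 0 4 (by decide) (by decide)).2 (by decide)
      · exact h2
    · have hu' : u ∈ ({2, 3, 4} : Finset (Fin 6)) := hu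
      rw [Finset.mem_insert, Finset.mem_insert, Finset.mem_singleton] at hu'
      rcases hu' with rfl | rfl | rfl
      · exact G.adj_symm h0
      · exact G.adj_symm h1
      · exact G.adj_symm h2
  have hIG : IGLe G fB2 := IGLe_of_reads fB2 RB2 hread hadj
  have hfix : ∀ t, fB2 (PB2 t) = PB2 t := by decide
  have hinj : Function.Injective PB2 := by
    intro t s h
    funext i
    fin_cases i
    · have h0 : e2 (t 0) (t 1) = e2 (s 0) (s 1) := congrFun h 2
      simpa [dL_e2, dR_e2] using congrArg dL h0
    · have h0 : e2 (t 0) (t 1) = e2 (s 0) (s 1) := congrFun h 2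
      simpa [dL_e2, dR_e2] using congrArg dR h0
    · have h0 : e2 (t 2) (t 3) = e2 (s 2) (s 3) := congrFun h 3
      simpa [dL_e2, dR_e2] using congrArg dL h0
    · have h0 : e2 (t 2) (t 3) = e2 (s 2) (s 3) := congrFun h 3
      simpa [dL_e2, dR_e2] using congrArg dR h0
    · have h0 : e2 (t 4) (t 5) = e2 (s 4) (s 5) := congrFun h 4
      simpa [dL_e2, dR_e2] using congrArg dL h0
    · have h0 : e2 (t 4) (t 5) = e2 (s 4) (s 5) := congrFun h 4
      simpa [dL_e2, dR_e2] using congrArg dR h0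
    · have h0 : e2 (t 4 + t 5) (t 6) = e2 (s 4 + s 5) (s 6) := congrFun h 0
      simpa [dL_e2, dR_e2] using congrArg dR h0
  have hcard := card_fix_ge fB2 PB2 hinj hfix
  rw [show Fintype.card (Fin 7 → Fin 2) = 128 by simp [Fintype.card_fun]] at hcard
  have := le_guessing (G := G) (by norm_num) fB2 hIG
  refine le_trans ?_ this
  rw [ncard_fix]
  calc (7:ℝ)/2 = Real.logb 4 128 := by
        rw [show (4:ℝ) = (2:ℝ)^2 by norm_num, show (128:ℝ) = (2:ℝ)^7 by norm_num,
          logb_pow_pow 2 7 (by norm_num)]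
        norm_num
    _ ≤ Real.logb 4 ((fixSet fB2).card) := by
        apply Real.logb_le_logb_of_le (by norm_num) (by norm_num)
        exact_mod_cast hcard

def fB3 : (Fin 6 → Fin 4) → Fin 6 → Fin 4 := fun x => ![e2 (dL (x 4) + dL (x 1) + dR (x 5)) (dL (x 4) + dR (x 5)), e2 (dL (x 0) + dR (x 0)) (dR (x 2)), e2 (dR (x 3)) (dR (x 1)), e2 (dL (x 4) + dR (x 4) + dL (x 5)) (dL (x 2)), e2 (dR (x 0) + dR (x 5)) (dL (x 3) + dR (x 0) + dL (x 5) + dR (x 5)), e2 (dL (x 3) + dL (x 4) + dR (x 4)) (dL (x 4) + dR (x 0))]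
def PB3 : (Fin 7 → Fin 2) → Fin 6 → Fin 4 := fun t => ![e2 (t 4) (t 5), e2 (t 4 + t 5) (t 6), e2 (t 1) (t 6), e2 (t 0) (t 1), e2 (t 2) (t 3), e2 (t 0 + t 2 + t 3) (t 2 + t 5)]
def RB3 : Fin 6 → Finset (Fin 6) := ![{4, 1, 5}, {0, 2}, {3, 1}, {4, 2, 5}, {3, 0, 5}, {3, 4, 0}]

lemma ge72_3 {G : SimpleGraph (Fin 6)}
    (hcycle : ∀ i j : Fin 6, i.val < 5 → j.val < 5 →
      (G.Adj i j ↔ (i.val + 1) % 5 = j.val ∨ (j.val + 1) % 5 = i.val))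
    (h0 : G.Adj 5 3) (h1 : G.Adj 5 4) (h2 : G.Adj 5 0) :
    (7:ℝ)/2 ≤ guessing G 4 := by
  have hread : ∀ v (a b : Fin 6 → Fin 4), (∀ u ∈ RB3 v, a u = b u) → fB3 a v = fB3 b v := by
    intro v a b h
    fin_cases v
    · have h4 : a 4 = b 4 := h 4 (by decide); have h1 : a 1 = b 1 := h 1 (by decide); have h5 : a 5 = b 5 := h 5 (by decide)
      show e2 (dL (a 4) + dL (a 1) + dR (a 5)) (dL (a 4) + dR (a 5)) = e2 (dL (b 4) + dL (b 1) + dR (b 5)) (dL (b 4) + dR (b 5))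
      rw [h4, h1, h5]
    · have h0 : a 0 = b 0 := h 0 (by decide); have h2 : a 2 = b 2 := h 2 (by decide)
      show e2 (dL (a 0) + dR (a 0)) (dR (a 2)) = e2 (dL (b 0) + dR (b 0)) (dR (b 2))
      rw [h0, h2]
    · have h3 : a 3 = b 3 := h 3 (by decide); have h1 : a 1 = b 1 := h 1 (by decide)
      show e2 (dR (a 3)) (dR (a 1)) = e2 (dR (b 3)) (dR (b 1))
      rw [h3, h1]
    · have h4 : a 4 = b 4 := h 4 (by decide); have h2 : a 2 = b 2 := h 2 (by decide); have h5 : a 5 = b 5 := h 5 (by decide)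
      show e2 (dL (a 4) + dR (a 4) + dL (a 5)) (dL (a 2)) = e2 (dL (b 4) + dR (b 4) + dL (b 5)) (dL (b 2))
      rw [h4, h2, h5]
    · have h3 : a 3 = b 3 := h 3 (by decide); have h0 : a 0 = b 0 := h 0 (by decide); have h5 : a 5 = b 5 := h 5 (by decide)
      show e2 (dR (a 0) + dR (a 5)) (dL (a 3) + dR (a 0) + dL (a 5) + dR (a 5)) = e2 (dR (b 0) + dR (b 5)) (dL (b 3) + dR (b 0) + dL (b 5) + dR (b 5))
      rw [h3, h0, h5]
    · have h3 : a 3 = b 3 := h 3 (by decide); have h4 : a 4 = b 4 := h 4 (by decide); have h0 : a 0 = b 0 := h 0 (by decide)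
      show e2 (dL (a 3) + dL (a 4) + dR (a 4)) (dL (a 4) + dR (a 0)) = e2 (dL (b 3) + dL (b 4) + dR (b 4)) (dL (b 4) + dR (b 0))
      rw [h3, h4, h0]
  have hadj : ∀ v : Fin 6, ∀ u ∈ RB3 v, G.Adj u v := by
    intro v u hu
    fin_cases v
    · have hu' : u ∈ ({4, 1, 5} : Finset (Fin 6)) := hu
      rw [Finset.mem_insert, Finset.mem_insert, Finset.mem_singleton] at hu'
      rcases hu' with rfl | rfl | rfl
      · exact (hcycle 4 0 (by decide) (by decide)).2 (by decide)
      · exact (hcycle 1 0 (by decide) (by decide)).2 (by decide)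
      · exact h2
    · have hu' : u ∈ ({0, 2} : Finset (Fin 6)) := hu
      rw [Finset.mem_insert, Finset.mem_singleton] at hu'
      rcases hu' with rfl | rfl
      · exact (hcycle 0 1 (by decide) (by decide)).2 (by decide)
      · exact (hcycle 2 1 (by decide) (by decide)).2 (by decide)
    · have hu' : u ∈ ({3, 1} : Finset (Fin 6)) := hu
      rw [Finset.mem_insert, Finset.mem_singleton] at hu'
      rcases hu' with rfl | rfl
      · exact (hcycle 3 2 (by decide) (by decide)).2 (by decide)
      · exact (hcycle 1 2 (by decide) (by decide)).2 (by decide)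
    · have hu' : u ∈ ({4, 2, 5} : Finset (Fin 6)) := hu
      rw [Finset.mem_insert, Finset.mem_insert, Finset.mem_singleton] at hu'
      rcases hu' with rfl | rfl | rfl
      · exact (hcycle 4 3 (by decide) (by decide)).2 (by decide)
      · exact (hcycle 2 3 (by decide) (by decide)).2 (by decide)
      · exact h0
    · have hu' : u ∈ ({3, 0, 5} : Finset (Fin 6)) := hu
      rw [Finset.mem_insert, Finset.mem_insert, Finset.mem_singleton] at hu'
      rcases hu' with rfl | rfl | rfl
      · exact (hcycle 3 4 (by decide) (by decide)).2 (by decide)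
      · exact (hcycle 0 4 (by decide) (by decide)).2 (by decide)
      · exact h1
    · have hu' : u ∈ ({3, 4, 0} : Finset (Fin 6)) := hu
      rw [Finset.mem_insert, Finset.mem_insert, Finset.mem_singleton] at hu'
      rcases hu' with rfl | rfl | rfl
      · exact G.adj_symm h0
      · exact G.adj_symm h1
      · exact G.adj_symm h2
  have hIG : IGLe G fB3 := IGLe_of_reads fB3 RB3 hread hadj
  have hfix : ∀ t, fB3 (PB3 t) = PB3 t := by decide
  have hinj : Function.Injective PB3 := by
    intro t s h
    funext i
    fin_cases i
    · have h0 : e2 (t 0) (t 1) = e2 (s 0) (s 1) := congrFun h 3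
      simpa [dL_e2, dR_e2] using congrArg dL h0
    · have h0 : e2 (t 0) (t 1) = e2 (s 0) (s 1) := congrFun h 3
      simpa [dL_e2, dR_e2] using congrArg dR h0
    · have h0 : e2 (t 2) (t 3) = e2 (s 2) (s 3) := congrFun h 4
      simpa [dL_e2, dR_e2] using congrArg dL h0
    · have h0 : e2 (t 2) (t 3) = e2 (s 2) (s 3) := congrFun h 4
      simpa [dL_e2, dR_e2] using congrArg dR h0
    · have h0 : e2 (t 4) (t 5) = e2 (s 4) (s 5) := congrFun h 0
      simpa [dL_e2, dR_e2] using congrArg dL h0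
    · have h0 : e2 (t 4) (t 5) = e2 (s 4) (s 5) := congrFun h 0
      simpa [dL_e2, dR_e2] using congrArg dR h0
    · have h0 : e2 (t 4 + t 5) (t 6) = e2 (s 4 + s 5) (s 6) := congrFun h 1
      simpa [dL_e2, dR_e2] using congrArg dR h0
  have hcard := card_fix_ge fB3 PB3 hinj hfix
  rw [show Fintype.card (Fin 7 → Fin 2) = 128 by simp [Fintype.card_fun]] at hcard
  have := le_guessing (G := G) (by norm_num) fB3 hIG
  refine le_trans ?_ this
  rw [ncard_fix]
  calc (7:ℝ)/2 = Real.logb 4 128 := by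
        rw [show (4:ℝ) = (2:ℝ)^2 by norm_num, show (128:ℝ) = (2:ℝ)^7 by norm_num,
          logb_pow_pow 2 7 (by norm_num)]
        norm_num
    _ ≤ Real.logb 4 ((fixSet fB3).card) := by
        apply Real.logb_le_logb_of_le (by norm_num) (by norm_num)
        exact_mod_cast hcard

def fB4 : (Fin 6 → Fin 4) → Fin 6 → Fin 4 := fun x => ![e2 (dR (x 1) + dR (x 5)) (dL (x 4) + dR (x 1) + dL (x 5) + dR (x 5)), e2 (dL (x 0) + dL (x 2) + dR (x 5)) (dL (x 0) + dR (x 5)), e2 (dL (x 1) + dR (x 1)) (dR (x 3)), e2 (dR (x 4)) (dR (x 2)), e2 (dL (x 0) + dR (x 0) + dL (x 5)) (dL (x 3)), e2 (dL (x 4) + dL (x 0) + dR (x 0)) (dL (x 0) + dR (x 1))]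
def PB4 : (Fin 7 → Fin 2) → Fin 6 → Fin 4 := fun t => ![e2 (t 2) (t 3), e2 (t 4) (t 5), e2 (t 4 + t 5) (t 6), e2 (t 1) (t 6), e2 (t 0) (t 1), e2 (t 0 + t 2 + t 3) (t 2 + t 5)]
def RB4 : Fin 6 → Finset (Fin 6) := ![{4, 1, 5}, {0, 2, 5}, {1, 3}, {4, 2}, {0, 3, 5}, {4, 0, 1}]

lemma ge72_4 {G : SimpleGraph (Fin 6)}
    (hcycle : ∀ i j : Fin 6, i.val < 5 → j.val < 5 →
      (G.Adj i j ↔ (i.val + 1) % 5 = j.val ∨ (j.val + 1) % 5 = i.val))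
    (h0 : G.Adj 5 4) (h1 : G.Adj 5 0) (h2 : G.Adj 5 1) :
    (7:ℝ)/2 ≤ guessing G 4 := by
  have hread : ∀ v (a b : Fin 6 → Fin 4), (∀ u ∈ RB4 v, a u = b u) → fB4 a v = fB4 b v := by
    intro v a b h
    fin_cases v
    · have h4 : a 4 = b 4 := h 4 (by decide); have h1 : a 1 = b 1 := h 1 (by decide); have h5 : a 5 = b 5 := h 5 (by decide)
      show e2 (dR (a 1) + dR (a 5)) (dL (a 4) + dR (a 1) + dL (a 5) + dR (a 5)) = e2 (dR (b 1) + dR (b 5)) (dL (b 4) + dR (b 1) + dL (b 5) + dR (b 5))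
      rw [h4, h1, h5]
    · have h0 : a 0 = b 0 := h 0 (by decide); have h2 : a 2 = b 2 := h 2 (by decide); have h5 : a 5 = b 5 := h 5 (by decide)
      show e2 (dL (a 0) + dL (a 2) + dR (a 5)) (dL (a 0) + dR (a 5)) = e2 (dL (b 0) + dL (b 2) + dR (b 5)) (dL (b 0) + dR (b 5))
      rw [h0, h2, h5]
    · have h1 : a 1 = b 1 := h 1 (by decide); have h3 : a 3 = b 3 := h 3 (by decide)
      show e2 (dL (a 1) + dR (a 1)) (dR (a 3)) = e2 (dL (b 1) + dR (b 1)) (dR (b 3))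
      rw [h1, h3]
    · have h4 : a 4 = b 4 := h 4 (by decide); have h2 : a 2 = b 2 := h 2 (by decide)
      show e2 (dR (a 4)) (dR (a 2)) = e2 (dR (b 4)) (dR (b 2))
      rw [h4, h2]
    · have h0 : a 0 = b 0 := h 0 (by decide); have h3 : a 3 = b 3 := h 3 (by decide); have h5 : a 5 = b 5 := h 5 (by decide)
      show e2 (dL (a 0) + dR (a 0) + dL (a 5)) (dL (a 3)) = e2 (dL (b 0) + dR (b 0) + dL (b 5)) (dL (b 3))
      rw [h0, h3, h5]
    · have h4 : a 4 = b 4 := h 4 (by decide); have h0 : a 0 = b 0 := h 0 (by decide); have h1 : a 1 = b 1 := h 1 (by decide)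
      show e2 (dL (a 4) + dL (a 0) + dR (a 0)) (dL (a 0) + dR (a 1)) = e2 (dL (b 4) + dL (b 0) + dR (b 0)) (dL (b 0) + dR (b 1))
      rw [h4, h0, h1]
  have hadj : ∀ v : Fin 6, ∀ u ∈ RB4 v, G.Adj u v := by
    intro v u hu
    fin_cases v
    · have hu' : u ∈ ({4, 1, 5} : Finset (Fin 6)) := hu
      rw [Finset.mem_insert, Finset.mem_insert, Finset.mem_singleton] at hu'
      rcases hu' with rfl | rfl | rfl
      · exact (hcycle 4 0 (by decide) (by decide)).2 (by decide)
      · exact (hcycle 1 0 (by decide) (by decide)).2 (by decide)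
      · exact h1
    · have hu' : u ∈ ({0, 2, 5} : Finset (Fin 6)) := hu
      rw [Finset.mem_insert, Finset.mem_insert, Finset.mem_singleton] at hu'
      rcases hu' with rfl | rfl | rfl
      · exact (hcycle 0 1 (by decide) (by decide)).2 (by decide)
      · exact (hcycle 2 1 (by decide) (by decide)).2 (by decide)
      · exact h2
    · have hu' : u ∈ ({1, 3} : Finset (Fin 6)) := hu
      rw [Finset.mem_insert, Finset.mem_singleton] at hu'
      rcases hu' with rfl | rfl
      · exact (hcycle 1 2 (by decide) (by decide)).2 (by decide)
      · exact (hcycle 3 2 (by decide) (by decide)).2 (by decide)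
    · have hu' : u ∈ ({4, 2} : Finset (Fin 6)) := hu
      rw [Finset.mem_insert, Finset.mem_singleton] at hu'
      rcases hu' with rfl | rfl
      · exact (hcycle 4 3 (by decide) (by decide)).2 (by decide)
      · exact (hcycle 2 3 (by decide) (by decide)).2 (by decide)
    · have hu' : u ∈ ({0, 3, 5} : Finset (Fin 6)) := hu
      rw [Finset.mem_insert, Finset.mem_insert, Finset.mem_singleton] at hu'
      rcases hu' with rfl | rfl | rfl
      · exact (hcycle 0 4 (by decide) (by decide)).2 (by decide)
      · exact (hcycle 3 4 (by decide) (by decide)).2 (by decide)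
      · exact h0
    · have hu' : u ∈ ({4, 0, 1} : Finset (Fin 6)) := hu
      rw [Finset.mem_insert, Finset.mem_insert, Finset.mem_singleton] at hu'
      rcases hu' with rfl | rfl | rfl
      · exact G.adj_symm h0
      · exact G.adj_symm h1
      · exact G.adj_symm h2
  have hIG : IGLe G fB4 := IGLe_of_reads fB4 RB4 hread hadj
  have hfix : ∀ t, fB4 (PB4 t) = PB4 t := by decide
  have hinj : Function.Injective PB4 := by
    intro t s h
    funext i
    fin_cases i
    · have h0 : e2 (t 0) (t 1) = e2 (s 0) (s 1) := congrFun h 4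
      simpa [dL_e2, dR_e2] using congrArg dL h0
    · have h0 : e2 (t 0) (t 1) = e2 (s 0) (s 1) := congrFun h 4
      simpa [dL_e2, dR_e2] using congrArg dR h0
    · have h0 : e2 (t 2) (t 3) = e2 (s 2) (s 3) := congrFun h 0
      simpa [dL_e2, dR_e2] using congrArg dL h0
    · have h0 : e2 (t 2) (t 3) = e2 (s 2) (s 3) := congrFun h 0
      simpa [dL_e2, dR_e2] using congrArg dR h0
    · have h0 : e2 (t 4) (t 5) = e2 (s 4) (s 5) := congrFun h 1
      simpa [dL_e2, dR_e2] using congrArg dL h0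
    · have h0 : e2 (t 4) (t 5) = e2 (s 4) (s 5) := congrFun h 1
      simpa [dL_e2, dR_e2] using congrArg dR h0
    · have h0 : e2 (t 4 + t 5) (t 6) = e2 (s 4 + s 5) (s 6) := congrFun h 2
      simpa [dL_e2, dR_e2] using congrArg dR h0
  have hcard := card_fix_ge fB4 PB4 hinj hfix
  rw [show Fintype.card (Fin 7 → Fin 2) = 128 by simp [Fintype.card_fun]] at hcard
  have := le_guessing (G := G) (by norm_num) fB4 hIG
  refine le_trans ?_ this
  rw [ncard_fix]
  calc (7:ℝ)/2 = Real.logb 4 128 := by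
        rw [show (4:ℝ) = (2:ℝ)^2 by norm_num, show (128:ℝ) = (2:ℝ)^7 by norm_num,
          logb_pow_pow 2 7 (by norm_num)]
        norm_num
    _ ≤ Real.logb 4 ((fixSet fB4).card) := by
        apply Real.logb_le_logb_of_le (by norm_num) (by norm_num)
        exact_mod_cast hcard

def fC0 : (Fin 6 → Fin 2) → Fin 6 → Fin 2 := fun x => ![x 5, x 2, x 1, x 4, x 3, x 0]
def PC0 : (Fin 3 → Fin 2) → Fin 6 → Fin 2 := fun t => ![t 0, t 1, t 1, t 2, t 2, t 0]
def RC0 : Fin 6 → Finset (Fin 6) := ![{5}, {2}, {1}, {4}, {3}, {0}]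

lemma ge3_0 {G : SimpleGraph (Fin 6)}
    (hcycle : ∀ i j : Fin 6, i.val < 5 → j.val < 5 →
      (G.Adj i j ↔ (i.val + 1) % 5 = j.val ∨ (j.val + 1) % 5 = i.val))
    (h0 : G.Adj 5 0) :
    (3:ℝ) ≤ guessing G 2 := by
  have hread : ∀ v (a b : Fin 6 → Fin 2), (∀ u ∈ RC0 v, a u = b u) → fC0 a v = fC0 b v := by
    intro v a b h
    fin_cases v
    · have hu : a 5 = b 5 := h 5 (by decide)
      show a 5 = b 5
      exact hu
    · have hu : a 2 = b 2 := h 2 (by decide)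
      show a 2 = b 2
      exact hu
    · have hu : a 1 = b 1 := h 1 (by decide)
      show a 1 = b 1
      exact hu
    · have hu : a 4 = b 4 := h 4 (by decide)
      show a 4 = b 4
      exact hu
    · have hu : a 3 = b 3 := h 3 (by decide)
      show a 3 = b 3
      exact hu
    · have hu : a 0 = b 0 := h 0 (by decide)
      show a 0 = b 0
      exact hu
  have hadj : ∀ v : Fin 6, ∀ u ∈ RC0 v, G.Adj u v := by
    intro v u hu
    fin_cases v
    · have hu' : u ∈ ({5} : Finset (Fin 6)) := hu
      rw [Finset.mem_singleton] at hu'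
      subst hu'
      exact h0
    · have hu' : u ∈ ({2} : Finset (Fin 6)) := hu
      rw [Finset.mem_singleton] at hu'
      subst hu'
      exact (hcycle 2 1 (by decide) (by decide)).2 (by decide)
    · have hu' : u ∈ ({1} : Finset (Fin 6)) := hu
      rw [Finset.mem_singleton] at hu'
      subst hu'
      exact (hcycle 1 2 (by decide) (by decide)).2 (by decide)
    · have hu' : u ∈ ({4} : Finset (Fin 6)) := hu
      rw [Finset.mem_singleton] at hu'
      subst hu'
      exact (hcycle 4 3 (by decide) (by decide)).2 (by decide)
    · have hu' : u ∈ ({3} : Finset (Fin 6)) := hu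
      rw [Finset.mem_singleton] at hu'
      subst hu'
      exact (hcycle 3 4 (by decide) (by decide)).2 (by decide)
    · have hu' : u ∈ ({0} : Finset (Fin 6)) := hu
      rw [Finset.mem_singleton] at hu'
      subst hu'
      exact G.adj_symm h0
  have hIG : IGLe G fC0 := IGLe_of_reads fC0 RC0 hread hadj
  have hfix : ∀ t, fC0 (PC0 t) = PC0 t := by decide
  have hinj : Function.Injective PC0 := by
    intro t s h
    funext i
    fin_cases i
    · exact congrFun h 5
    · exact congrFun h 1
    · exact congrFun h 3
  have hcard := card_fix_ge fC0 PC0 hinj hfix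
  rw [show Fintype.card (Fin 3 → Fin 2) = 8 by simp [Fintype.card_fun]] at hcard
  have := le_guessing (G := G) (by norm_num) fC0 hIG
  refine le_trans ?_ this
  rw [ncard_fix]
  calc (3:ℝ) = Real.logb 2 8 := by
        rw [show (8:ℝ) = (2:ℝ)^(3:ℕ) by norm_num, Real.logb_pow,
          Real.logb_self_eq_one (by norm_num)]
        norm_num
    _ ≤ Real.logb 2 ((fixSet fC0).card) := by
        apply Real.logb_le_logb_of_le (by norm_num) (by norm_num)
        exact_mod_cast hcard

def fC1 : (Fin 6 → Fin 2) → Fin 6 → Fin 2 := fun x => ![x 4, x 5, x 3, x 2, x 0, x 1]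
def PC1 : (Fin 3 → Fin 2) → Fin 6 → Fin 2 := fun t => ![t 2, t 0, t 1, t 1, t 2, t 0]
def RC1 : Fin 6 → Finset (Fin 6) := ![{4}, {5}, {3}, {2}, {0}, {1}]

lemma ge3_1 {G : SimpleGraph (Fin 6)}
    (hcycle : ∀ i j : Fin 6, i.val < 5 → j.val < 5 →
      (G.Adj i j ↔ (i.val + 1) % 5 = j.val ∨ (j.val + 1) % 5 = i.val))
    (h0 : G.Adj 5 1) :
    (3:ℝ) ≤ guessing G 2 := by
  have hread : ∀ v (a b : Fin 6 → Fin 2), (∀ u ∈ RC1 v, a u = b u) → fC1 a v = fC1 b v := by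
    intro v a b h
    fin_cases v
    · have hu : a 4 = b 4 := h 4 (by decide)
      show a 4 = b 4
      exact hu
    · have hu : a 5 = b 5 := h 5 (by decide)
      show a 5 = b 5
      exact hu
    · have hu : a 3 = b 3 := h 3 (by decide)
      show a 3 = b 3
      exact hu
    · have hu : a 2 = b 2 := h 2 (by decide)
      show a 2 = b 2
      exact hu
    · have hu : a 0 = b 0 := h 0 (by decide)
      show a 0 = b 0
      exact hu
    · have hu : a 1 = b 1 := h 1 (by decide)
      show a 1 = b 1
      exact hu
  have hadj : ∀ v : Fin 6, ∀ u ∈ RC1 v, G.Adj u v := by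
    intro v u hu
    fin_cases v
    · have hu' : u ∈ ({4} : Finset (Fin 6)) := hu
      rw [Finset.mem_singleton] at hu'
      subst hu'
      exact (hcycle 4 0 (by decide) (by decide)).2 (by decide)
    · have hu' : u ∈ ({5} : Finset (Fin 6)) := hu
      rw [Finset.mem_singleton] at hu'
      subst hu'
      exact h0
    · have hu' : u ∈ ({3} : Finset (Fin 6)) := hu
      rw [Finset.mem_singleton] at hu'
      subst hu'
      exact (hcycle 3 2 (by decide) (by decide)).2 (by decide)
    · have hu' : u ∈ ({2} : Finset (Fin 6)) := hu
      rw [Finset.mem_singleton] at hu'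
      subst hu'
      exact (hcycle 2 3 (by decide) (by decide)).2 (by decide)
    · have hu' : u ∈ ({0} : Finset (Fin 6)) := hu
      rw [Finset.mem_singleton] at hu'
      subst hu'
      exact (hcycle 0 4 (by decide) (by decide)).2 (by decide)
    · have hu' : u ∈ ({1} : Finset (Fin 6)) := hu
      rw [Finset.mem_singleton] at hu'
      subst hu'
      exact G.adj_symm h0
  have hIG : IGLe G fC1 := IGLe_of_reads fC1 RC1 hread hadj
  have hfix : ∀ t, fC1 (PC1 t) = PC1 t := by decide
  have hinj : Function.Injective PC1 := by
    intro t s h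
    funext i
    fin_cases i
    · exact congrFun h 5
    · exact congrFun h 2
    · exact congrFun h 4
  have hcard := card_fix_ge fC1 PC1 hinj hfix
  rw [show Fintype.card (Fin 3 → Fin 2) = 8 by simp [Fintype.card_fun]] at hcard
  have := le_guessing (G := G) (by norm_num) fC1 hIG
  refine le_trans ?_ this
  rw [ncard_fix]
  calc (3:ℝ) = Real.logb 2 8 := by
        rw [show (8:ℝ) = (2:ℝ)^(3:ℕ) by norm_num, Real.logb_pow,
          Real.logb_self_eq_one (by norm_num)]
        norm_num
    _ ≤ Real.logb 2 ((fixSet fC1).card) := by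
        apply Real.logb_le_logb_of_le (by norm_num) (by norm_num)
        exact_mod_cast hcard

def fC2 : (Fin 6 → Fin 2) → Fin 6 → Fin 2 := fun x => ![x 1, x 0, x 5, x 4, x 3, x 2]
def PC2 : (Fin 3 → Fin 2) → Fin 6 → Fin 2 := fun t => ![t 2, t 2, t 0, t 1, t 1, t 0]
def RC2 : Fin 6 → Finset (Fin 6) := ![{1}, {0}, {5}, {4}, {3}, {2}]

lemma ge3_2 {G : SimpleGraph (Fin 6)}
    (hcycle : ∀ i j : Fin 6, i.val < 5 → j.val < 5 →
      (G.Adj i j ↔ (i.val + 1) % 5 = j.val ∨ (j.val + 1) % 5 = i.val))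
    (h0 : G.Adj 5 2) :
    (3:ℝ) ≤ guessing G 2 := by
  have hread : ∀ v (a b : Fin 6 → Fin 2), (∀ u ∈ RC2 v, a u = b u) → fC2 a v = fC2 b v := by
    intro v a b h
    fin_cases v
    · have hu : a 1 = b 1 := h 1 (by decide)
      show a 1 = b 1
      exact hu
    · have hu : a 0 = b 0 := h 0 (by decide)
      show a 0 = b 0
      exact hu
    · have hu : a 5 = b 5 := h 5 (by decide)
      show a 5 = b 5
      exact hu
    · have hu : a 4 = b 4 := h 4 (by decide)
      show a 4 = b 4
      exact hu
    · have hu : a 3 = b 3 := h 3 (by decide)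
      show a 3 = b 3
      exact hu
    · have hu : a 2 = b 2 := h 2 (by decide)
      show a 2 = b 2
      exact hu
  have hadj : ∀ v : Fin 6, ∀ u ∈ RC2 v, G.Adj u v := by
    intro v u hu
    fin_cases v
    · have hu' : u ∈ ({1} : Finset (Fin 6)) := hu
      rw [Finset.mem_singleton] at hu'
      subst hu'
      exact (hcycle 1 0 (by decide) (by decide)).2 (by decide)
    · have hu' : u ∈ ({0} : Finset (Fin 6)) := hu
      rw [Finset.mem_singleton] at hu'
      subst hu'
      exact (hcycle 0 1 (by decide) (by decide)).2 (by decide)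
    · have hu' : u ∈ ({5} : Finset (Fin 6)) := hu
      rw [Finset.mem_singleton] at hu'
      subst hu'
      exact h0
    · have hu' : u ∈ ({4} : Finset (Fin 6)) := hu
      rw [Finset.mem_singleton] at hu'
      subst hu'
      exact (hcycle 4 3 (by decide) (by decide)).2 (by decide)
    · have hu' : u ∈ ({3} : Finset (Fin 6)) := hu
      rw [Finset.mem_singleton] at hu'
      subst hu'
      exact (hcycle 3 4 (by decide) (by decide)).2 (by decide)
    · have hu' : u ∈ ({2} : Finset (Fin 6)) := hu
      rw [Finset.mem_singleton] at hu'
      subst hu'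
      exact G.adj_symm h0
  have hIG : IGLe G fC2 := IGLe_of_reads fC2 RC2 hread hadj
  have hfix : ∀ t, fC2 (PC2 t) = PC2 t := by decide
  have hinj : Function.Injective PC2 := by
    intro t s h
    funext i
    fin_cases i
    · exact congrFun h 5
    · exact congrFun h 3
    · exact congrFun h 0
  have hcard := card_fix_ge fC2 PC2 hinj hfix
  rw [show Fintype.card (Fin 3 → Fin 2) = 8 by simp [Fintype.card_fun]] at hcard
  have := le_guessing (G := G) (by norm_num) fC2 hIG
  refine le_trans ?_ this
  rw [ncard_fix]
  calc (3:ℝ) = Real.logb 2 8 := by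
        rw [show (8:ℝ) = (2:ℝ)^(3:ℕ) by norm_num, Real.logb_pow,
          Real.logb_self_eq_one (by norm_num)]
        norm_num
    _ ≤ Real.logb 2 ((fixSet fC2).card) := by
        apply Real.logb_le_logb_of_le (by norm_num) (by norm_num)
        exact_mod_cast hcard

def fC3 : (Fin 6 → Fin 2) → Fin 6 → Fin 2 := fun x => ![x 4, x 2, x 1, x 5, x 0, x 3]
def PC3 : (Fin 3 → Fin 2) → Fin 6 → Fin 2 := fun t => ![t 1, t 2, t 2, t 0, t 1, t 0]
def RC3 : Fin 6 → Finset (Fin 6) := ![{4}, {2}, {1}, {5}, {0}, {3}]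

lemma ge3_3 {G : SimpleGraph (Fin 6)}
    (hcycle : ∀ i j : Fin 6, i.val < 5 → j.val < 5 →
      (G.Adj i j ↔ (i.val + 1) % 5 = j.val ∨ (j.val + 1) % 5 = i.val))
    (h0 : G.Adj 5 3) :
    (3:ℝ) ≤ guessing G 2 := by
  have hread : ∀ v (a b : Fin 6 → Fin 2), (∀ u ∈ RC3 v, a u = b u) → fC3 a v = fC3 b v := by
    intro v a b h
    fin_cases v
    · have hu : a 4 = b 4 := h 4 (by decide)
      show a 4 = b 4
      exact hu
    · have hu : a 2 = b 2 := h 2 (by decide)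
      show a 2 = b 2
      exact hu
    · have hu : a 1 = b 1 := h 1 (by decide)
      show a 1 = b 1
      exact hu
    · have hu : a 5 = b 5 := h 5 (by decide)
      show a 5 = b 5
      exact hu
    · have hu : a 0 = b 0 := h 0 (by decide)
      show a 0 = b 0
      exact hu
    · have hu : a 3 = b 3 := h 3 (by decide)
      show a 3 = b 3
      exact hu
  have hadj : ∀ v : Fin 6, ∀ u ∈ RC3 v, G.Adj u v := by
    intro v u hu
    fin_cases v
    · have hu' : u ∈ ({4} : Finset (Fin 6)) := hu
      rw [Finset.mem_singleton] at hu'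
      subst hu'
      exact (hcycle 4 0 (by decide) (by decide)).2 (by decide)
    · have hu' : u ∈ ({2} : Finset (Fin 6)) := hu
      rw [Finset.mem_singleton] at hu'
      subst hu'
      exact (hcycle 2 1 (by decide) (by decide)).2 (by decide)
    · have hu' : u ∈ ({1} : Finset (Fin 6)) := hu
      rw [Finset.mem_singleton] at hu'
      subst hu'
      exact (hcycle 1 2 (by decide) (by decide)).2 (by decide)
    · have hu' : u ∈ ({5} : Finset (Fin 6)) := hu
      rw [Finset.mem_singleton] at hu'
      subst hu'
      exact h0
    · have hu' : u ∈ ({0} : Finset (Fin 6)) := hu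
      rw [Finset.mem_singleton] at hu'
      subst hu'
      exact (hcycle 0 4 (by decide) (by decide)).2 (by decide)
    · have hu' : u ∈ ({3} : Finset (Fin 6)) := hu
      rw [Finset.mem_singleton] at hu'
      subst hu'
      exact G.adj_symm h0
  have hIG : IGLe G fC3 := IGLe_of_reads fC3 RC3 hread hadj
  have hfix : ∀ t, fC3 (PC3 t) = PC3 t := by decide
  have hinj : Function.Injective PC3 := by
    intro t s h
    funext i
    fin_cases i
    · exact congrFun h 5
    · exact congrFun h 4
    · exact congrFun h 1
  have hcard := card_fix_ge fC3 PC3 hinj hfix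
  rw [show Fintype.card (Fin 3 → Fin 2) = 8 by simp [Fintype.card_fun]] at hcard
  have := le_guessing (G := G) (by norm_num) fC3 hIG
  refine le_trans ?_ this
  rw [ncard_fix]
  calc (3:ℝ) = Real.logb 2 8 := by
        rw [show (8:ℝ) = (2:ℝ)^(3:ℕ) by norm_num, Real.logb_pow,
          Real.logb_self_eq_one (by norm_num)]
        norm_num
    _ ≤ Real.logb 2 ((fixSet fC3).card) := by
        apply Real.logb_le_logb_of_le (by norm_num) (by norm_num)
        exact_mod_cast hcard

def fC4 : (Fin 6 → Fin 2) → Fin 6 → Fin 2 := fun x => ![x 1, x 0, x 3, x 2, x 5, x 4]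
def PC4 : (Fin 3 → Fin 2) → Fin 6 → Fin 2 := fun t => ![t 1, t 1, t 2, t 2, t 0, t 0]
def RC4 : Fin 6 → Finset (Fin 6) := ![{1}, {0}, {3}, {2}, {5}, {4}]

lemma ge3_4 {G : SimpleGraph (Fin 6)}
    (hcycle : ∀ i j : Fin 6, i.val < 5 → j.val < 5 →
      (G.Adj i j ↔ (i.val + 1) % 5 = j.val ∨ (j.val + 1) % 5 = i.val))
    (h0 : G.Adj 5 4) :
    (3:ℝ) ≤ guessing G 2 := by
  have hread : ∀ v (a b : Fin 6 → Fin 2), (∀ u ∈ RC4 v, a u = b u) → fC4 a v = fC4 b v := by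
    intro v a b h
    fin_cases v
    · have hu : a 1 = b 1 := h 1 (by decide)
      show a 1 = b 1
      exact hu
    · have hu : a 0 = b 0 := h 0 (by decide)
      show a 0 = b 0
      exact hu
    · have hu : a 3 = b 3 := h 3 (by decide)
      show a 3 = b 3
      exact hu
    · have hu : a 2 = b 2 := h 2 (by decide)
      show a 2 = b 2
      exact hu
    · have hu : a 5 = b 5 := h 5 (by decide)
      show a 5 = b 5
      exact hu
    · have hu : a 4 = b 4 := h 4 (by decide)
      show a 4 = b 4
      exact hu
  have hadj : ∀ v : Fin 6, ∀ u ∈ RC4 v, G.Adj u v := by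
    intro v u hu
    fin_cases v
    · have hu' : u ∈ ({1} : Finset (Fin 6)) := hu
      rw [Finset.mem_singleton] at hu'
      subst hu'
      exact (hcycle 1 0 (by decide) (by decide)).2 (by decide)
    · have hu' : u ∈ ({0} : Finset (Fin 6)) := hu
      rw [Finset.mem_singleton] at hu'
      subst hu'
      exact (hcycle 0 1 (by decide) (by decide)).2 (by decide)
    · have hu' : u ∈ ({3} : Finset (Fin 6)) := hu
      rw [Finset.mem_singleton] at hu'
      subst hu'
      exact (hcycle 3 2 (by decide) (by decide)).2 (by decide)
    · have hu' : u ∈ ({2} : Finset (Fin 6)) := hu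
      rw [Finset.mem_singleton] at hu'
      subst hu'
      exact (hcycle 2 3 (by decide) (by decide)).2 (by decide)
    · have hu' : u ∈ ({5} : Finset (Fin 6)) := hu
      rw [Finset.mem_singleton] at hu'
      subst hu'
      exact h0
    · have hu' : u ∈ ({4} : Finset (Fin 6)) := hu
      rw [Finset.mem_singleton] at hu'
      subst hu'
      exact G.adj_symm h0
  have hIG : IGLe G fC4 := IGLe_of_reads fC4 RC4 hread hadj
  have hfix : ∀ t, fC4 (PC4 t) = PC4 t := by decide
  have hinj : Function.Injective PC4 := by
    intro t s h
    funext i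
    fin_cases i
    · exact congrFun h 5
    · exact congrFun h 0
    · exact congrFun h 2
  have hcard := card_fix_ge fC4 PC4 hinj hfix
  rw [show Fintype.card (Fin 3 → Fin 2) = 8 by simp [Fintype.card_fun]] at hcard
  have := le_guessing (G := G) (by norm_num) fC4 hIG
  refine le_trans ?_ this
  rw [ncard_fix]
  calc (3:ℝ) = Real.logb 2 8 := by
        rw [show (8:ℝ) = (2:ℝ)^(3:ℕ) by norm_num, Real.logb_pow,
          Real.logb_self_eq_one (by norm_num)]
        norm_num
    _ ≤ Real.logb 2 ((fixSet fC4).card) := by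
        apply Real.logb_le_logb_of_le (by norm_num) (by norm_num)
        exact_mod_cast hcard

end Constructions

/-- Lemma on the pentagon plus a sixth vertex. Vertices `v₁,…,v₆` are `0,…,5 : Fin 6`;
the subgraph induced on `{0,…,4}` is the 5-cycle `0-1-2-3-4-0` (all other edges being
incident to `5`). Then `H(G) = 5/2` if `5` is isolated, `H(G) = 7/2` if the neighbourhood
of `5` contains three consecutive vertices of the 5-cycle, and `H(G) = 3` otherwise. -/
theorem entropy_pentagon_plus_vertex (G : SimpleGraph (Fin 6))
    (hcycle : ∀ i j : Fin 6, i.val < 5 → j.val < 5 →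
      (G.Adj i j ↔ (i.val + 1) % 5 = j.val ∨ (j.val + 1) % 5 = i.val))
    (hinc : ∀ i j : Fin 6, G.Adj i j → (i.val < 5 ∧ j.val < 5) ∨ i = 5 ∨ j = 5) :
    ((∀ j, ¬ G.Adj 5 j) → graphEntropy G = 5/2) ∧
    ((∃ i j l : Fin 6, i.val < 5 ∧ j.val < 5 ∧ l.val < 5 ∧
        (i.val + 1) % 5 = j.val ∧ (j.val + 1) % 5 = l.val ∧
        G.Adj 5 i ∧ G.Adj 5 j ∧ G.Adj 5 l) → graphEntropy G = 7/2) ∧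
    ((∃ j, G.Adj 5 j) →
      ¬ (∃ i j l : Fin 6, i.val < 5 ∧ j.val < 5 ∧ l.val < 5 ∧
        (i.val + 1) % 5 = j.val ∧ (j.val + 1) % 5 = l.val ∧
        G.Adj 5 i ∧ G.Adj 5 j ∧ G.Adj 5 l) → graphEntropy G = 3) := by
  classical
  have key72 : ∀ i j l : Fin 6, i.val < 5 → j.val < 5 → l.val < 5 →
      (i.val + 1) % 5 = j.val → (j.val + 1) % 5 = l.val →
      (i = 0 ∧ j = 1 ∧ l = 2) ∨ (i = 1 ∧ j = 2 ∧ l = 3) ∨ (i = 2 ∧ j = 3 ∧ l = 4) ∨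
      (i = 3 ∧ j = 4 ∧ l = 0) ∨ (i = 4 ∧ j = 0 ∧ l = 1) := by decide
  have key5 : ∀ j : Fin 6, j.val < 5 → j = 0 ∨ j = 1 ∨ j = 2 ∨ j = 3 ∨ j = 4 := by decide
  refine ⟨?_, ?_, ?_⟩
  · -- isolated vertex : 5/2
    intro h5
    apply graphEntropy_eq (by norm_num) 4 (by norm_num)
    · intro q hq
      apply guessing_le (by norm_num)
      intro f hf
      exact fix_le_52 hcycle hinc h5 hq f hf
    · exact ge52 hcycle
  · rintro ⟨i, j, l, hi, hj, hl, hij, hjl, hAi, hAj, hAl⟩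
    apply graphEntropy_eq (by norm_num) 4 (by norm_num)
    · intro q hq
      apply guessing_le (by norm_num)
      intro f hf
      exact fix_le_72 hcycle hinc hq f hf
    · rcases key72 i j l hi hj hl hij hjl with ⟨rfl, rfl, rfl⟩ | ⟨rfl, rfl, rfl⟩ |
        ⟨rfl, rfl, rfl⟩ | ⟨rfl, rfl, rfl⟩ | ⟨rfl, rfl, rfl⟩
      · exact ge72_0 hcycle hAi hAj hAl
      · exact ge72_1 hcycle hAi hAj hAl
      · exact ge72_2 hcycle hAi hAj hAl
      · exact ge72_3 hcycle hAi hAj hAl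
      · exact ge72_4 hcycle hAi hAj hAl
  · rintro ⟨j0, hAj0⟩ hno
    -- the neighbourhood of the apex contains no three consecutive cycle vertices
    have bool5 : ∀ P : Fin 5 → Bool,
        (∀ i : Fin 5, ¬(P i = true ∧ P (i+1) = true ∧ P (i+2) = true)) →
        ∃ a : Fin 5, P a = false ∧ P (a+2) = false := by decide
    have hadd1 : ∀ i : Fin 5, ((Fin.castLE (Nat.le_succ 5) i).val + 1) % 5 = (Fin.castLE (Nat.le_succ 5) (i+1)).val := by
      decide
    have hnom : ∀ i : Fin 5,
        ¬((fun i : Fin 5 => decide (G.Adj 5 (Fin.castLE (Nat.le_succ 5) i))) i = true ∧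
          (fun i : Fin 5 => decide (G.Adj 5 (Fin.castLE (Nat.le_succ 5) i))) (i+1) = true ∧
          (fun i : Fin 5 => decide (G.Adj 5 (Fin.castLE (Nat.le_succ 5) i))) (i+2) = true) := by
      rintro i ⟨h1, h2, h3⟩
      apply hno
      refine ⟨Fin.castLE (Nat.le_succ 5) i, Fin.castLE (Nat.le_succ 5) (i+1), Fin.castLE (Nat.le_succ 5) (i+2),
        i.isLt, (i+1 : Fin 5).isLt, (i+2 : Fin 5).isLt, hadd1 i, ?_,
        of_decide_eq_true h1, of_decide_eq_true h2, of_decide_eq_true h3⟩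
      have := hadd1 (i+1)
      rw [add_assoc] at this
      exact this
    obtain ⟨a, hPa, hPa2⟩ := bool5 _ hnom
    have hvalne : ∀ b : Fin 5, Fin.castLE (Nat.le_succ 5) b ≠ Fin.castLE (Nat.le_succ 5) (b+2) := by decide
    have hnadjval : ∀ b : Fin 5,
        ¬(((Fin.castLE (Nat.le_succ 5) b).val + 1) % 5 = (Fin.castLE (Nat.le_succ 5) (b+2)).val ∨
          ((Fin.castLE (Nat.le_succ 5) (b+2)).val + 1) % 5 = (Fin.castLE (Nat.le_succ 5) b).val) := by decide
    have hA5 : (Fin.castLE (Nat.le_succ 5) a).val < 5 := a.isLt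
    have hB5 : (Fin.castLE (Nat.le_succ 5) (a+2)).val < 5 := (a+2 : Fin 5).isLt
    have hABne : Fin.castLE (Nat.le_succ 5) a ≠ Fin.castLE (Nat.le_succ 5) (a+2) := hvalne a
    have hABnadj : ¬ G.Adj (Fin.castLE (Nat.le_succ 5) a) (Fin.castLE (Nat.le_succ 5) (a+2)) := by
      intro h
      exact hnadjval a ((hcycle _ _ hA5 hB5).1 h)
    have h5A : ¬ G.Adj 5 (Fin.castLE (Nat.le_succ 5) a) := by
      intro h
      have : decide (G.Adj 5 (Fin.castLE (Nat.le_succ 5) a)) = true := decide_eq_true h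
      rw [hPa] at this
      exact Bool.false_ne_true this
    have h5B : ¬ G.Adj 5 (Fin.castLE (Nat.le_succ 5) (a+2)) := by
      intro h
      have : decide (G.Adj 5 (Fin.castLE (Nat.le_succ 5) (a+2))) = true := decide_eq_true h
      rw [hPa2] at this
      exact Bool.false_ne_true this
    apply graphEntropy_eq (by norm_num) 2 (by norm_num)
    · intro q hq
      apply guessing_le (by norm_num)
      intro f hf
      exact fix_le_3 hcycle hinc _ _ hA5 hB5 hABne hABnadj h5A h5B hq f hf
    · have hj0ne : j0 ≠ 5 := fun h => G.irrefl (h ▸ hAj0)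
      have hj0v : j0.val < 5 := by
        have h6 := j0.isLt
        have : j0.val ≠ 5 := fun h => hj0ne (Fin.ext h)
        omega
      rcases key5 j0 hj0v with rfl | rfl | rfl | rfl | rfl
      · exact ge3_0 hcycle hAj0
      · exact ge3_1 hcycle hAj0
      · exact ge3_2 hcycle hAj0
      · exact ge3_3 hcycle hAj0
      · exact ge3_4 hcycle hAj0

end
end
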